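/- arXiv:1809.01527 — 3 statements merged into one kernel-verified Lean document; each statement's English description precedes it below -/
import Mathlib

section
/- Let u : ℤ → ℂ be finitely supported, and for j ∈ ℤ define F_j(u) := Σ_{(j₁,j₂,j₃,j₄,j₅)∈R(j)} u_{j₁}·conj(u_{j₂})·u_{j₃}·conj(u_{j₄})·u_{j₅}, where R(j) = {(j₁,…,j₅) ∈ ℤ⁵ : j₁−j₂+j₃−j₄+j₅ = j and j₁²−j₂²+j₃²−j₄²+j₅² = j²}. Then Σ_{j∈ℤ} Im(conj(u_j)·F_j(u)) = 0. -/
open scoped ComplexConjugate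

private lemma tsum_zero_of_neg_equiv {X : Type*} (f : X → ℝ) (e : X ≃ X)
    (h : ∀ x, f (e x) = - f x) : ∑' x, f x = 0 := by
  have h2 := (e.tsum_eq f).symm
  rw [tsum_congr h, tsum_neg] at h2
  linarith

private lemma im_eq_neg_im (x y : ℂ) (h : x = conj y) : x.im = -y.im := by
  rw [h]; exact Complex.conj_im y

set_option maxHeartbeats 1000000 in
/-- Mass conservation for the quintic resonant system:
`∑_j Im(conj(u_j) · F_j(u)) = 0`. -/
theorem quintic_resonant_mass_bracket (u : ℤ → ℂ) (hu : (Function.support u).Finite) :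
    ∑' j : ℤ,
      (conj (u j) *
        ∑' v : {v : ℤ × ℤ × ℤ × ℤ × ℤ //
            v.1 - v.2.1 + v.2.2.1 - v.2.2.2.1 + v.2.2.2.2 = j ∧
            v.1 ^ 2 - v.2.1 ^ 2 + v.2.2.1 ^ 2 - v.2.2.2.1 ^ 2 + v.2.2.2.2 ^ 2 = j ^ 2},
          u v.val.1 * conj (u v.val.2.1) * u v.val.2.2.1 *
            conj (u v.val.2.2.2.1) * u v.val.2.2.2.2).im = 0 := by
  classical
  set P : ℤ → ℤ × ℤ × ℤ × ℤ × ℤ → Prop := fun j v =>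
    v.1 - v.2.1 + v.2.2.1 - v.2.2.2.1 + v.2.2.2.2 = j ∧
    v.1 ^ 2 - v.2.1 ^ 2 + v.2.2.1 ^ 2 - v.2.2.2.1 ^ 2 + v.2.2.2.2 ^ 2 = j ^ 2 with hP
  set G : ℤ × (ℤ × ℤ × ℤ × ℤ × ℤ) → ℂ := fun w =>
    conj (u w.1) * (u w.2.1 * conj (u w.2.2.1) * u w.2.2.2.1 *
      conj (u w.2.2.2.2.1) * u w.2.2.2.2.2) with hG
  have hGsupp : (Function.support G).Finite := by
    apply Set.Finite.subset (Set.Finite.prod hu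
      ((hu.prod (hu.prod (hu.prod (hu.prod hu))))))
    intro w hw
    simp only [Function.mem_support, hG] at hw
    by_contra hmem
    simp only [Set.mem_prod, Function.mem_support, not_and_or, not_not] at hmem
    apply hw
    rcases hmem with h | h | h | h | h | h <;> simp [h]
  have hsub : ∀ {α : Type} (p : α → ℤ × (ℤ × ℤ × ℤ × ℤ × ℤ)), Function.Injective p →
      Summable fun a => G (p a) := by
    intro α p hp
    apply summable_of_finite_support
    exact (hGsupp.preimage hp.injOn).subset (fun a ha => ha)
  -- Step 1: pull conj(u j) and .im inside the inner tsum
  have step1 : ∀ j : ℤ,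
      (conj (u j) * ∑' v : {v // P j v},
          u v.val.1 * conj (u v.val.2.1) * u v.val.2.2.1 *
            conj (u v.val.2.2.2.1) * u v.val.2.2.2.2).im
        = ∑' v : {v // P j v}, (G (j, v.val)).im := by
    intro j
    rw [← tsum_mul_left]
    have hsum : Summable fun v : {v // P j v} => G (j, v.val) := by
      apply hsub (fun v : {v // P j v} => (j, v.val))
      intro a b hab
      exact Subtype.ext (congrArg Prod.snd hab)
    rw [show (∑' v : {v // P j v}, conj (u j) *
          (u v.val.1 * conj (u v.val.2.1) * u v.val.2.2.1 *
            conj (u v.val.2.2.2.1) * u v.val.2.2.2.2))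
        = ∑' v : {v // P j v}, G (j, v.val) from by
      apply tsum_congr; intro v; simp only [hG]]
    exact Complex.im_tsum hsum
  rw [hP] at step1
  rw [show (∑' j : ℤ, (conj (u j) * ∑' v : {v : ℤ × ℤ × ℤ × ℤ × ℤ //
            v.1 - v.2.1 + v.2.2.1 - v.2.2.2.1 + v.2.2.2.2 = j ∧
            v.1 ^ 2 - v.2.1 ^ 2 + v.2.2.1 ^ 2 - v.2.2.2.1 ^ 2 + v.2.2.2.2 ^ 2 = j ^ 2},
          u v.val.1 * conj (u v.val.2.1) * u v.val.2.2.1 *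
            conj (u v.val.2.2.2.1) * u v.val.2.2.2.2).im)
      = ∑' j : ℤ, ∑' v : {v // P j v}, (G (j, v.val)).im from tsum_congr step1]
  -- Step 2: combine into a single tsum over the sigma type
  have hinj : Function.Injective
      (fun p : (Σ j : ℤ, {v // P j v}) => (p.1, p.2.val)) := by
    rintro ⟨j, v, hv⟩ ⟨j', v', hv'⟩ h
    simp only [Prod.mk.injEq] at h
    obtain ⟨h1, h2⟩ := h
    subst h1
    simp [h2]
  have hsumSigma : Summable fun p : (Σ j : ℤ, {v // P j v}) => (G (p.1, p.2.val)).im := by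
    apply summable_of_finite_support
    apply ((hGsupp.preimage hinj.injOn).subset)
    intro p hp
    simp only [Function.mem_support] at hp ⊢
    intro h
    exact hp (by rw [show G (p.1, p.2.val) = 0 from h]; simp)
  rw [← Summable.tsum_sigma' (fun j => (hsumSigma.sigma_factor j)) hsumSigma]
  -- Step 3: transfer to the subtype of pairs
  have heq : (∑' p : (Σ j : ℤ, {v // P j v}), (G (p.1, p.2.val)).im)
      = ∑' w : {w : ℤ × (ℤ × ℤ × ℤ × ℤ × ℤ) // P w.1 w.2}, (G w.val).im := by
    exact Equiv.tsum_eq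
      (⟨fun p => ⟨(p.1, p.2.val), p.2.property⟩,
        fun w => ⟨w.val.1, w.val.2, w.property⟩,
        by rintro ⟨j, v, h⟩; rfl,
        by rintro ⟨⟨j, v⟩, h⟩; rfl⟩ :
        (Σ j : ℤ, {v // P j v}) ≃ {w : ℤ × (ℤ × ℤ × ℤ × ℤ × ℤ) // P w.1 w.2})
      (fun w => (G w.val).im)
  rw [heq]
  apply tsum_zero_of_neg_equiv (X := {w : ℤ × (ℤ × ℤ × ℤ × ℤ × ℤ) // P w.1 w.2})
    (fun w => (G w.val).im)
    (⟨fun w => ⟨(w.val.2.1, (w.val.1, w.val.2.2.2.1, w.val.2.2.1,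
        w.val.2.2.2.2.2, w.val.2.2.2.2.1)), by
          obtain ⟨⟨j, a, b, c, d, f⟩, h1, h2⟩ := w
          simp only [hP] at h1 h2 ⊢
          exact ⟨by linarith, by linarith⟩⟩,
      fun w => ⟨(w.val.2.1, (w.val.1, w.val.2.2.2.1, w.val.2.2.1,
        w.val.2.2.2.2.2, w.val.2.2.2.2.1)), by
          obtain ⟨⟨j, a, b, c, d, f⟩, h1, h2⟩ := w
          simp only [hP] at h1 h2 ⊢
          exact ⟨by linarith, by linarith⟩⟩,
      by rintro ⟨⟨j, a, b, c, d, f⟩, h⟩; rfl,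
      by rintro ⟨⟨j, a, b, c, d, f⟩, h⟩; rfl⟩)
  rintro ⟨⟨j, a, b, c, d, f⟩, h⟩
  apply im_eq_neg_im
  simp only [hG, Equiv.coe_fn_mk, map_mul, Complex.conj_conj]
  ring
end

section
/- There exists a constant C > 0 such that for every finitely supported u : ℤ → ℂ, (Σ_{j∈ℤ} ⟨j⟩² |F_j(u)|²)^{1/2} ≤ C (Σ_j ⟨j⟩²|u_j|²)^{5/2}, where F_j(u) = Σ_{(j₁,…,j₅): j₁−j₂+j₃−j₄+j₅=j, j₁²−j₂²+j₃²−j₄²+j₅²=j²} u_{j₁} conj(u_{j₂}) u_{j₃} conj(u_{j₄}) u_{j₅}. -/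
open scoped ComplexConjugate

section Helpers

noncomputable def Wt (m : ℤ) : ℝ := Real.sqrt (1 + (m : ℝ) ^ 2)

lemma Wt_nonneg (m : ℤ) : 0 ≤ Wt m := Real.sqrt_nonneg _

lemma Wt_sq (m : ℤ) : Wt m ^ 2 = 1 + (m : ℝ) ^ 2 := Real.sq_sqrt (by positivity)

lemma Wt_pos (m : ℤ) : 0 < Wt m := Real.sqrt_pos.mpr (by positivity)

lemma Wt_aux (m : ℤ) : 1 + |(m : ℝ)| ≤ Real.sqrt 2 * Wt m := by
  have h1 : (1 + |(m : ℝ)|) ^ 2 ≤ 2 * (1 + (m : ℝ) ^ 2) := by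
    nlinarith [sq_nonneg (|(m:ℝ)| - 1), sq_abs (m:ℝ)]
  have h2 := Real.sqrt_le_sqrt h1
  rw [Real.sqrt_sq (by positivity)] at h2
  rw [Real.sqrt_mul (by norm_num : (0:ℝ) ≤ 2)] at h2
  exact h2

lemma Wt_le_one_add_abs (m : ℤ) : Wt m ≤ 1 + |(m : ℝ)| := by
  have h1 : 1 + (m : ℝ) ^ 2 ≤ (1 + |(m : ℝ)|) ^ 2 := by
    nlinarith [abs_nonneg (m:ℝ), sq_abs (m:ℝ)]
  have := Real.sqrt_le_sqrt h1
  rwa [Real.sqrt_sq (by positivity)] at this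

lemma Wt_tri {j k1 k2 k3 k4 k5 : ℤ} (h : k1 - k2 + k3 - k4 + k5 = j) :
    Wt j ≤ Real.sqrt 2 * (Wt k1 + Wt k2 + Wt k3 + Wt k4 + Wt k5) := by
  have habs : |(j : ℝ)| ≤ |(k1 : ℝ)| + |(k2 : ℝ)| + |(k3 : ℝ)| + |(k4 : ℝ)| + |(k5 : ℝ)| := by
    have : (j : ℝ) = (k1 : ℝ) - k2 + k3 - k4 + k5 := by exact_mod_cast congrArg (Int.cast : ℤ → ℝ) h.symm
    rw [this]
    calc |(k1 : ℝ) - k2 + k3 - k4 + k5| ≤ |(k1 : ℝ) - k2 + k3 - k4| + |(k5 : ℝ)| := abs_add_le _ _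
      _ ≤ |(k1 : ℝ) - k2 + k3| + |(k4 : ℝ)| + |(k5 : ℝ)| := by
          have := abs_sub ((k1 : ℝ) - k2 + k3) (k4 : ℝ); linarith
      _ ≤ |(k1 : ℝ) - k2| + |(k3 : ℝ)| + |(k4 : ℝ)| + |(k5 : ℝ)| := by
          have := abs_add_le ((k1 : ℝ) - k2) (k3 : ℝ); linarith
      _ ≤ |(k1 : ℝ)| + |(k2 : ℝ)| + |(k3 : ℝ)| + |(k4 : ℝ)| + |(k5 : ℝ)| := by
          have := abs_sub (k1 : ℝ) (k2 : ℝ); linarith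
  have e1 := Wt_aux k1; have e2 := Wt_aux k2; have e3 := Wt_aux k3
  have e4 := Wt_aux k4; have e5 := Wt_aux k5
  have h0 := Wt_le_one_add_abs j
  have hs2 : (1:ℝ) ≤ Real.sqrt 2 := by
    rw [show (1:ℝ) = Real.sqrt 1 by simp]
    exact Real.sqrt_le_sqrt (by norm_num)
  nlinarith [mul_le_mul_of_nonneg_left habs (le_trans zero_le_one hs2)]

lemma lemA {ι : Type*} (K : Finset ι) (f : ι → ℝ) (hf : ∀ k, 0 ≤ f k)
    (g : ℤ → ℝ) (φ : ι → ℤ → ℤ) (hφ : ∀ k, Function.Injective (φ k))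
    (Sb : Finset ℤ) (hg0 : ∀ m ∉ Sb, g m = 0) (J : Finset ℤ) :
    ∑ j ∈ J, (∑ k ∈ K, f k * g (φ k j)) ^ 2
      ≤ (∑ k ∈ K, f k) ^ 2 * ∑ m ∈ Sb, g m ^ 2 := by
  classical
  set B2 := ∑ m ∈ Sb, g m ^ 2 with hB2
  have key : ∀ k : ι, ∑ j ∈ J, g (φ k j) ^ 2 ≤ B2 := by
    intro k
    have h1 : ∑ m ∈ J.image (φ k), g m ^ 2 = ∑ j ∈ J, g (φ k j) ^ 2 :=
      Finset.sum_image (fun x _ y _ h => hφ k h)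
    rw [← h1]
    have h2 : ∑ m ∈ J.image (φ k), g m ^ 2 = ∑ m ∈ (J.image (φ k)) ∩ Sb, g m ^ 2 := by
      refine (Finset.sum_subset Finset.inter_subset_left ?_).symm
      intro x hx hx2
      have hxs : x ∉ Sb := fun h => hx2 (Finset.mem_inter.mpr ⟨hx, h⟩)
      rw [hg0 x hxs]; ring
    rw [h2]
    exact Finset.sum_le_sum_of_subset_of_nonneg Finset.inter_subset_right
      (fun _ _ _ => sq_nonneg _)
  have inner : ∀ k k' : ι, ∑ j ∈ J, g (φ k j) * g (φ k' j) ≤ B2 := by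
    intro k k'
    have h1 : ∑ j ∈ J, g (φ k j) * g (φ k' j)
        ≤ ∑ j ∈ J, (g (φ k j) ^ 2 + g (φ k' j) ^ 2) / 2 := by
      refine Finset.sum_le_sum fun j _ => ?_
      nlinarith [sq_nonneg (g (φ k j) - g (φ k' j))]
    have h2 : ∑ j ∈ J, (g (φ k j) ^ 2 + g (φ k' j) ^ 2) / 2
        = ((∑ j ∈ J, g (φ k j) ^ 2) + ∑ j ∈ J, g (φ k' j) ^ 2) / 2 := by
      rw [← Finset.sum_add_distrib, Finset.sum_div]
    have h3 := key k; have h4 := key k'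
    linarith
  calc ∑ j ∈ J, (∑ k ∈ K, f k * g (φ k j)) ^ 2
      = ∑ j ∈ J, ∑ k ∈ K, ∑ k' ∈ K, (f k * f k') * (g (φ k j) * g (φ k' j)) := by
        refine Finset.sum_congr rfl fun j _ => ?_
        rw [sq, Finset.sum_mul_sum]
        exact Finset.sum_congr rfl fun k _ => Finset.sum_congr rfl fun k' _ => by ring
    _ = ∑ k ∈ K, ∑ k' ∈ K, (f k * f k') * ∑ j ∈ J, g (φ k j) * g (φ k' j) := by
        rw [Finset.sum_comm]
        refine Finset.sum_congr rfl fun k _ => ?_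
        rw [Finset.sum_comm]
        refine Finset.sum_congr rfl fun k' _ => ?_
        rw [Finset.mul_sum]
    _ ≤ ∑ k ∈ K, ∑ k' ∈ K, (f k * f k') * B2 := by
        refine Finset.sum_le_sum fun k _ => Finset.sum_le_sum fun k' _ => ?_
        exact mul_le_mul_of_nonneg_left (inner k k') (mul_nonneg (hf k) (hf k'))
    _ = (∑ k ∈ K, f k) ^ 2 * B2 := by
        rw [sq, Finset.sum_mul_sum, Finset.sum_mul]
        refine Finset.sum_congr rfl fun k _ => ?_
        rw [Finset.sum_mul]

lemma sum4 (s : Finset ℤ) (a : ℤ → ℝ) :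
    ∑ k ∈ s ×ˢ s ×ˢ s ×ˢ s, a k.1 * a k.2.1 * a k.2.2.1 * a k.2.2.2
      = (∑ j ∈ s, a j) ^ 4 := by
  simp_rw [Finset.sum_product]
  simp_rw [show ∀ x y z w : ℤ, a x * a y * a z * a w = a x * (a y * (a z * a w))
    from fun _ _ _ _ => by ring]
  simp_rw [← Finset.mul_sum, ← Finset.sum_mul]
  ring

abbrev Res (j : ℤ) := {v : ℤ × ℤ × ℤ × ℤ × ℤ //
    v.1 - v.2.1 + v.2.2.1 - v.2.2.2.1 + v.2.2.2.2 = j ∧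
    v.1 ^ 2 - v.2.1 ^ 2 + v.2.2.1 ^ 2 - v.2.2.2.1 ^ 2 + v.2.2.2.2 ^ 2 = j ^ 2}

noncomputable def term (u : ℤ → ℂ) (j : ℤ) (v : Res j) : ℂ :=
  u v.val.1 * conj (u v.val.2.1) * u v.val.2.2.1 * conj (u v.val.2.2.2.1) * u v.val.2.2.2.2

lemma term_ne_zero {u : ℤ → ℂ} {j : ℤ} {v : Res j} (h : term u j v ≠ 0) :
    u v.val.1 ≠ 0 ∧ u v.val.2.1 ≠ 0 ∧ u v.val.2.2.1 ≠ 0 ∧ u v.val.2.2.2.1 ≠ 0 ∧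
      u v.val.2.2.2.2 ≠ 0 := by
  simp only [term, ne_eq, mul_eq_zero, not_or, map_eq_zero] at h
  exact ⟨h.1.1.1.1, h.1.1.1.2, h.1.1.2, h.1.2, h.2⟩

lemma norm_term (u : ℤ → ℂ) (j : ℤ) (v : Res j) :
    ‖term u j v‖ = ‖u v.val.1‖ * ‖u v.val.2.1‖ * ‖u v.val.2.2.1‖ * ‖u v.val.2.2.2.1‖ *
      ‖u v.val.2.2.2.2‖ := by
  simp [term, norm_mul, RCLike.norm_conj]

lemma summable_term_mul (u : ℤ → ℂ) (hu : (Function.support u).Finite) (j : ℤ)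
    (c : Res j → ℝ) :
    Summable fun v : Res j => c v * ‖term u j v‖ := by
  classical
  have hfin : ((Subtype.val : Res j → ℤ × ℤ × ℤ × ℤ × ℤ) ⁻¹'
      ((Function.support u) ×ˢ (Function.support u) ×ˢ (Function.support u) ×ˢ
        (Function.support u) ×ˢ (Function.support u))).Finite :=
    Set.Finite.preimage Subtype.val_injective.injOn
      (hu.prod (hu.prod (hu.prod (hu.prod hu))))
  apply summable_of_ne_finset_zero (s := hfin.toFinset)
  intro v hv
  rw [Set.Finite.mem_toFinset] at hv
  have hz : term u j v = 0 := by
    by_contra ht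
    obtain ⟨h1, h2, h3, h4, h5⟩ := term_ne_zero ht
    exact hv ⟨h1, h2, h3, h4, h5⟩
  rw [hz]
  simp

lemma slot (u : ℤ → ℂ) (hu : (Function.support u).Finite) (j : ℤ)
    (φ : ℤ × ℤ × ℤ × ℤ → ℤ → ℤ)
    (ι : Res j → ℤ × ℤ × ℤ × ℤ) (hι : Function.Injective ι)
    (wv : Res j → ℤ)
    (hval : ∀ v : Res j, Wt (wv v) * ‖term u j v‖ =
      (‖u (ι v).1‖ * ‖u (ι v).2.1‖ * ‖u (ι v).2.2.1‖ * ‖u (ι v).2.2.2‖) *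
        (Wt (φ (ι v) j) * ‖u (φ (ι v) j)‖)) :
    ∑' v : Res j, Wt (wv v) * ‖term u j v‖
      ≤ ∑ k ∈ hu.toFinset ×ˢ hu.toFinset ×ˢ hu.toFinset ×ˢ hu.toFinset,
          (‖u k.1‖ * ‖u k.2.1‖ * ‖u k.2.2.1‖ * ‖u k.2.2.2‖) * (Wt (φ k j) * ‖u (φ k j)‖) := by
  classical
  set G : ℤ × ℤ × ℤ × ℤ → ℝ := fun k =>
    (‖u k.1‖ * ‖u k.2.1‖ * ‖u k.2.2.1‖ * ‖u k.2.2.2‖) * (Wt (φ k j) * ‖u (φ k j)‖) with hG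
  have hGz : ∀ k ∉ hu.toFinset ×ˢ hu.toFinset ×ˢ hu.toFinset ×ˢ hu.toFinset, G k = 0 := by
    intro k hk
    by_contra h0
    apply hk
    simp only [hG, ne_eq, mul_eq_zero, not_or, norm_eq_zero] at h0
    simp only [Finset.mem_product, Set.Finite.mem_toFinset, Function.mem_support]
    exact ⟨h0.1.1.1.1, h0.1.1.1.2, h0.1.1.2, h0.1.2⟩
  have hGs : Summable G := summable_of_ne_finset_zero hGz
  have hLs : Summable fun v : Res j => Wt (wv v) * ‖term u j v‖ :=
    summable_term_mul u hu j _
  rw [← tsum_eq_sum (L := SummationFilter.unconditional _) hGz]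
  refine Summable.tsum_le_tsum_of_inj ι hι (fun k _ => ?_) (fun v => le_of_eq (hval v)) hLs hGs
  exact mul_nonneg (by positivity) (mul_nonneg (Wt_nonneg _) (norm_nonneg _))

end Helpers

set_option maxHeartbeats 1000000 in
/-- Quintic nonlinear estimate `‖F(u)‖_{h¹} ≲ ‖u‖_{h¹}⁵` for the resonant nonlinearity. -/
theorem quintic_nonlinear_estimate :
    ∃ C : ℝ, 0 < C ∧ ∀ u : ℤ → ℂ, (Function.support u).Finite →
      Real.sqrt (∑' j : ℤ, (1 + (j : ℝ) ^ 2) *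
          ‖∑' v : {v : ℤ × ℤ × ℤ × ℤ × ℤ //
              v.1 - v.2.1 + v.2.2.1 - v.2.2.2.1 + v.2.2.2.2 = j ∧
              v.1 ^ 2 - v.2.1 ^ 2 + v.2.2.1 ^ 2 - v.2.2.2.1 ^ 2 + v.2.2.2.2 ^ 2 = j ^ 2},
            u v.val.1 * conj (u v.val.2.1) * u v.val.2.2.1 *
              conj (u v.val.2.2.2.1) * u v.val.2.2.2.2‖ ^ 2)
        ≤ C * (∑' j : ℤ, (1 + (j : ℝ) ^ 2) * ‖u j‖ ^ 2) ^ ((5 : ℝ) / 2) := by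
  classical
  have hsum2 : Summable fun j : ℤ => 1 / (1 + (j : ℝ) ^ 2) := by
    have h1 : Summable fun j : ℤ => 1 / (j : ℝ) ^ 2 :=
      Real.summable_one_div_int_pow.mpr one_lt_two
    have h2 : Summable fun j : ℤ => (if j = 0 then (1 : ℝ) else 0) := by
      apply summable_of_ne_finset_zero (s := {(0 : ℤ)})
      intro b hb
      simp only [Finset.mem_singleton] at hb
      simp [hb]
    have h3 := h1.add h2
    refine Summable.of_nonneg_of_le (fun j => by positivity) (fun j => ?_) h3
    by_cases hj : j = 0
    · subst hj; norm_num
    · have hj1 : (1 : ℝ) ≤ (j : ℝ) ^ 2 := by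
        have : (1 : ℤ) ≤ j ^ 2 := by
          rcases lt_or_gt_of_ne hj with h | h <;> nlinarith
        exact_mod_cast this
      have hpos : (0 : ℝ) < (j : ℝ) ^ 2 := by linarith
      simp only [hj, if_false, add_zero]
      rw [div_le_div_iff₀ (by positivity) hpos]
      nlinarith
  set K₀ := ∑' j : ℤ, 1 / (1 + (j : ℝ) ^ 2) with hK₀
  have hK₀1 : 1 ≤ K₀ := by
    have h := Summable.le_tsum hsum2 0 (fun i _ => by positivity)
    rw [hK₀]
    refine le_trans (by norm_num) h
  refine ⟨8 * K₀ ^ 2, by nlinarith, ?_⟩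
  intro u hu
  show Real.sqrt (∑' j : ℤ, (1 + (j : ℝ) ^ 2) * ‖∑' v : Res j, term u j v‖ ^ 2)
      ≤ 8 * K₀ ^ 2 * (∑' j : ℤ, (1 + (j : ℝ) ^ 2) * ‖u j‖ ^ 2) ^ ((5 : ℝ) / 2)
  set S := hu.toFinset with hS
  have hmemS : ∀ m : ℤ, m ∈ S ↔ u m ≠ 0 := by
    intro m; rw [hS, Set.Finite.mem_toFinset]; rfl
  have huz : ∀ m ∉ S, u m = 0 := by
    intro m hm; by_contra h; exact hm ((hmemS m).mpr h)
  set X := ∑ j ∈ S, (1 + (j : ℝ) ^ 2) * ‖u j‖ ^ 2 with hX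
  have hX0 : 0 ≤ X := Finset.sum_nonneg fun j _ => by positivity
  have hXtsum : ∑' j : ℤ, (1 + (j : ℝ) ^ 2) * ‖u j‖ ^ 2 = X := by
    refine tsum_eq_sum fun j hj => ?_
    rw [huz j hj]; simp
  set A1 := ∑ j ∈ S, ‖u j‖ with hA1def
  have hA10 : 0 ≤ A1 := Finset.sum_nonneg fun j _ => norm_nonneg _
  have hA1sq : A1 ^ 2 ≤ K₀ * X := by
    have cs := Finset.sum_mul_sq_le_sq_mul_sq S (fun j => (Wt j)⁻¹) (fun j => Wt j * ‖u j‖)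
    have e1 : ∀ j : ℤ, (Wt j)⁻¹ * (Wt j * ‖u j‖) = ‖u j‖ := fun j =>
      inv_mul_cancel_left₀ (ne_of_gt (Wt_pos j)) _
    have e2 : ∀ j : ℤ, ((Wt j)⁻¹) ^ 2 = 1 / (1 + (j : ℝ) ^ 2) := fun j => by
      rw [← Wt_sq j]; rw [inv_pow]; rw [one_div]
    have e3 : ∀ j : ℤ, (Wt j * ‖u j‖) ^ 2 = (1 + (j : ℝ) ^ 2) * ‖u j‖ ^ 2 := fun j => by
      rw [mul_pow, Wt_sq]
    rw [Finset.sum_congr rfl fun j _ => e1 j] at cs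
    rw [Finset.sum_congr rfl fun j _ => e2 j] at cs
    rw [Finset.sum_congr rfl fun j _ => e3 j] at cs
    refine le_trans cs ?_
    rw [← hX]
    refine mul_le_mul_of_nonneg_right ?_ hX0
    exact Summable.sum_le_tsum S (fun i _ => by positivity) hsum2
  set K4 := S ×ˢ S ×ˢ S ×ˢ S with hK4
  set J := Finset.image
      (fun p : ℤ × ℤ × ℤ × ℤ × ℤ => p.1 - p.2.1 + p.2.2.1 - p.2.2.2.1 + p.2.2.2.2)
      (S ×ˢ S ×ˢ S ×ˢ S ×ˢ S) with hJ
  have hFz : ∀ j ∉ J, (∑' v : Res j, term u j v) = 0 := by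
    intro j hj
    have hzz : ∀ v : Res j, term u j v = 0 := by
      intro v
      by_contra ht
      obtain ⟨h1, h2, h3, h4, h5⟩ := term_ne_zero ht
      apply hj
      rw [hJ]
      refine Finset.mem_image.mpr ⟨v.val, ?_, v.prop.1⟩
      simp only [Finset.mem_product]
      exact ⟨(hmemS _).mpr h1, (hmemS _).mpr h2, (hmemS _).mpr h3,
        (hmemS _).mpr h4, (hmemS _).mpr h5⟩
    rw [tsum_congr hzz]
    simp
  -- the five shifted convolution bounds
  set φ1 : ℤ × ℤ × ℤ × ℤ → ℤ → ℤ := fun k j => j + k.1 - k.2.1 + k.2.2.1 - k.2.2.2 with hφ1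
  set φ2 : ℤ × ℤ × ℤ × ℤ → ℤ → ℤ := fun k j => k.1 + k.2.1 - k.2.2.1 + k.2.2.2 - j with hφ2
  set φ3 : ℤ × ℤ × ℤ × ℤ → ℤ → ℤ := fun k j => j - k.1 + k.2.1 + k.2.2.1 - k.2.2.2 with hφ3
  set φ4 : ℤ × ℤ × ℤ × ℤ → ℤ → ℤ := fun k j => k.1 - k.2.1 + k.2.2.1 + k.2.2.2 - j with hφ4
  set φ5 : ℤ × ℤ × ℤ × ℤ → ℤ → ℤ := fun k j => j - k.1 + k.2.1 - k.2.2.1 + k.2.2.2 with hφ5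
  have hφ1i : ∀ k, Function.Injective (φ1 k) := fun k x y h => by simp [hφ1] at h; omega
  have hφ2i : ∀ k, Function.Injective (φ2 k) := fun k x y h => by simp [hφ2] at h; omega
  have hφ3i : ∀ k, Function.Injective (φ3 k) := fun k x y h => by simp [hφ3] at h; omega
  have hφ4i : ∀ k, Function.Injective (φ4 k) := fun k x y h => by simp [hφ4] at h; omega
  have hφ5i : ∀ k, Function.Injective (φ5 k) := fun k x y h => by simp [hφ5] at h; omega
  have Tdef : ∀ (φ : ℤ × ℤ × ℤ × ℤ → ℤ → ℤ), True := fun _ => trivial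
  set T : (ℤ × ℤ × ℤ × ℤ → ℤ → ℤ) → ℤ → ℝ := fun φ j =>
    ∑ k ∈ K4, (‖u k.1‖ * ‖u k.2.1‖ * ‖u k.2.2.1‖ * ‖u k.2.2.2‖) *
      (Wt (φ k j) * ‖u (φ k j)‖) with hT
  have hTnn : ∀ φ j, 0 ≤ T φ j := by
    intro φ j
    refine Finset.sum_nonneg fun k _ => ?_
    exact mul_nonneg (by positivity) (mul_nonneg (Wt_nonneg _) (norm_nonneg _))
  have hWF : ∀ j : ℤ, Wt j * ‖∑' v : Res j, term u j v‖ ≤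
      Real.sqrt 2 * (T φ1 j + T φ2 j + T φ3 j + T φ4 j + T φ5 j) := by
    intro j
    have hN : ‖∑' v : Res j, term u j v‖ ≤ ∑' v : Res j, ‖term u j v‖ := by
      apply norm_tsum_le_tsum_norm
      have h := summable_term_mul u hu j (fun _ => 1)
      simpa using h
    have step1 : Wt j * ‖∑' v : Res j, term u j v‖ ≤ ∑' v : Res j, Wt j * ‖term u j v‖ := by
      rw [tsum_mul_left]
      exact mul_le_mul_of_nonneg_left hN (Wt_nonneg j)
    have hs1 : Summable fun v : Res j => Wt v.val.1 * ‖term u j v‖ := summable_term_mul u hu j _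
    have hs2 : Summable fun v : Res j => Wt v.val.2.1 * ‖term u j v‖ := summable_term_mul u hu j _
    have hs3 : Summable fun v : Res j => Wt v.val.2.2.1 * ‖term u j v‖ := summable_term_mul u hu j _
    have hs4 : Summable fun v : Res j => Wt v.val.2.2.2.1 * ‖term u j v‖ :=
      summable_term_mul u hu j _
    have hs5 : Summable fun v : Res j => Wt v.val.2.2.2.2 * ‖term u j v‖ :=
      summable_term_mul u hu j _
    have step2 : ∑' v : Res j, Wt j * ‖term u j v‖ ≤
        ∑' v : Res j, (Real.sqrt 2 * (Wt v.val.1 + Wt v.val.2.1 + Wt v.val.2.2.1 +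
          Wt v.val.2.2.2.1 + Wt v.val.2.2.2.2)) * ‖term u j v‖ := by
      refine Summable.tsum_le_tsum (fun v => ?_) (summable_term_mul u hu j _) (summable_term_mul u hu j _)
      exact mul_le_mul_of_nonneg_right (Wt_tri v.prop.1) (norm_nonneg _)
    have step3 : ∑' v : Res j, (Real.sqrt 2 * (Wt v.val.1 + Wt v.val.2.1 + Wt v.val.2.2.1 +
          Wt v.val.2.2.2.1 + Wt v.val.2.2.2.2)) * ‖term u j v‖ =
        Real.sqrt 2 * ((∑' v : Res j, Wt v.val.1 * ‖term u j v‖) +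
          (∑' v : Res j, Wt v.val.2.1 * ‖term u j v‖) +
          (∑' v : Res j, Wt v.val.2.2.1 * ‖term u j v‖) +
          (∑' v : Res j, Wt v.val.2.2.2.1 * ‖term u j v‖) +
          (∑' v : Res j, Wt v.val.2.2.2.2 * ‖term u j v‖)) := by
      have e : (fun v : Res j => (Real.sqrt 2 * (Wt v.val.1 + Wt v.val.2.1 + Wt v.val.2.2.1 +
          Wt v.val.2.2.2.1 + Wt v.val.2.2.2.2)) * ‖term u j v‖) =
          fun v : Res j => Real.sqrt 2 * ((Wt v.val.1 * ‖term u j v‖ +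
            Wt v.val.2.1 * ‖term u j v‖ + Wt v.val.2.2.1 * ‖term u j v‖ +
            Wt v.val.2.2.2.1 * ‖term u j v‖) + Wt v.val.2.2.2.2 * ‖term u j v‖) :=
        funext fun v => by ring
      rw [e, tsum_mul_left, Summable.tsum_add (((hs1.add hs2).add hs3).add hs4) hs5,
        Summable.tsum_add ((hs1.add hs2).add hs3) hs4, Summable.tsum_add (hs1.add hs2) hs3, Summable.tsum_add hs1 hs2]
    have b1 : ∑' v : Res j, Wt v.val.1 * ‖term u j v‖ ≤ T φ1 j := by
      refine slot u hu j φ1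
        (fun v => (v.val.2.1, v.val.2.2.1, v.val.2.2.2.1, v.val.2.2.2.2)) ?_
        (fun v => v.val.1) ?_
      · intro v w hvw
        obtain ⟨⟨c1, c2, c3, c4, c5⟩, ha, hq1⟩ := v
        obtain ⟨⟨d1, d2, d3, d4, d5⟩, hb, hq2⟩ := w
        dsimp only at ha hb hvw
        simp only [Prod.mk.injEq] at hvw
        obtain ⟨e2, e3, e4, e5⟩ := hvw
        apply Subtype.ext
        simp only [Prod.mk.injEq]
        refine ⟨by omega, e2, e3, e4, e5⟩
      · rintro ⟨⟨c1, c2, c3, c4, c5⟩, ha, hq⟩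
        dsimp only at ha
        rw [norm_term]
        simp only [hφ1]
        have harg : j + c2 - c3 + c4 - c5 = c1 := by omega
        rw [harg]
        ring
    have b2 : ∑' v : Res j, Wt v.val.2.1 * ‖term u j v‖ ≤ T φ2 j := by
      refine slot u hu j φ2
        (fun v => (v.val.1, v.val.2.2.1, v.val.2.2.2.1, v.val.2.2.2.2)) ?_
        (fun v => v.val.2.1) ?_
      · intro v w hvw
        obtain ⟨⟨c1, c2, c3, c4, c5⟩, ha, hq1⟩ := v
        obtain ⟨⟨d1, d2, d3, d4, d5⟩, hb, hq2⟩ := w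
        dsimp only at ha hb hvw
        simp only [Prod.mk.injEq] at hvw
        obtain ⟨e1, e3, e4, e5⟩ := hvw
        apply Subtype.ext
        simp only [Prod.mk.injEq]
        refine ⟨e1, by omega, e3, e4, e5⟩
      · rintro ⟨⟨c1, c2, c3, c4, c5⟩, ha, hq⟩
        dsimp only at ha
        rw [norm_term]
        simp only [hφ2]
        have harg : c1 + c3 - c4 + c5 - j = c2 := by omega
        rw [harg]
        ring
    have b3 : ∑' v : Res j, Wt v.val.2.2.1 * ‖term u j v‖ ≤ T φ3 j := by
      refine slot u hu j φ3
        (fun v => (v.val.1, v.val.2.1, v.val.2.2.2.1, v.val.2.2.2.2)) ?_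
        (fun v => v.val.2.2.1) ?_
      · intro v w hvw
        obtain ⟨⟨c1, c2, c3, c4, c5⟩, ha, hq1⟩ := v
        obtain ⟨⟨d1, d2, d3, d4, d5⟩, hb, hq2⟩ := w
        dsimp only at ha hb hvw
        simp only [Prod.mk.injEq] at hvw
        obtain ⟨e1, e2, e4, e5⟩ := hvw
        apply Subtype.ext
        simp only [Prod.mk.injEq]
        refine ⟨e1, e2, by omega, e4, e5⟩
      · rintro ⟨⟨c1, c2, c3, c4, c5⟩, ha, hq⟩
        dsimp only at ha
        rw [norm_term]
        simp only [hφ3]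
        have harg : j - c1 + c2 + c4 - c5 = c3 := by omega
        rw [harg]
        ring
    have b4 : ∑' v : Res j, Wt v.val.2.2.2.1 * ‖term u j v‖ ≤ T φ4 j := by
      refine slot u hu j φ4
        (fun v => (v.val.1, v.val.2.1, v.val.2.2.1, v.val.2.2.2.2)) ?_
        (fun v => v.val.2.2.2.1) ?_
      · intro v w hvw
        obtain ⟨⟨c1, c2, c3, c4, c5⟩, ha, hq1⟩ := v
        obtain ⟨⟨d1, d2, d3, d4, d5⟩, hb, hq2⟩ := w
        dsimp only at ha hb hvw
        simp only [Prod.mk.injEq] at hvw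
        obtain ⟨e1, e2, e3, e5⟩ := hvw
        apply Subtype.ext
        simp only [Prod.mk.injEq]
        refine ⟨e1, e2, e3, by omega, e5⟩
      · rintro ⟨⟨c1, c2, c3, c4, c5⟩, ha, hq⟩
        dsimp only at ha
        rw [norm_term]
        simp only [hφ4]
        have harg : c1 - c2 + c3 + c5 - j = c4 := by omega
        rw [harg]
        ring
    have b5 : ∑' v : Res j, Wt v.val.2.2.2.2 * ‖term u j v‖ ≤ T φ5 j := by
      refine slot u hu j φ5
        (fun v => (v.val.1, v.val.2.1, v.val.2.2.1, v.val.2.2.2.1)) ?_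
        (fun v => v.val.2.2.2.2) ?_
      · intro v w hvw
        obtain ⟨⟨c1, c2, c3, c4, c5⟩, ha, hq1⟩ := v
        obtain ⟨⟨d1, d2, d3, d4, d5⟩, hb, hq2⟩ := w
        dsimp only at ha hb hvw
        simp only [Prod.mk.injEq] at hvw
        obtain ⟨e1, e2, e3, e4⟩ := hvw
        apply Subtype.ext
        simp only [Prod.mk.injEq]
        refine ⟨e1, e2, e3, e4, by omega⟩
      · rintro ⟨⟨c1, c2, c3, c4, c5⟩, ha, hq⟩
        dsimp only at ha
        rw [norm_term]
        simp only [hφ5]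
        have harg : j - c1 + c2 - c3 + c4 = c5 := by omega
        rw [harg]
        ring
    calc Wt j * ‖∑' v : Res j, term u j v‖
        ≤ ∑' v : Res j, Wt j * ‖term u j v‖ := step1
      _ ≤ ∑' v : Res j, (Real.sqrt 2 * (Wt v.val.1 + Wt v.val.2.1 + Wt v.val.2.2.1 +
            Wt v.val.2.2.2.1 + Wt v.val.2.2.2.2)) * ‖term u j v‖ := step2
      _ = Real.sqrt 2 * ((∑' v : Res j, Wt v.val.1 * ‖term u j v‖) +
            (∑' v : Res j, Wt v.val.2.1 * ‖term u j v‖) +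
            (∑' v : Res j, Wt v.val.2.2.1 * ‖term u j v‖) +
            (∑' v : Res j, Wt v.val.2.2.2.1 * ‖term u j v‖) +
            (∑' v : Res j, Wt v.val.2.2.2.2 * ‖term u j v‖)) := step3
      _ ≤ Real.sqrt 2 * (T φ1 j + T φ2 j + T φ3 j + T φ4 j + T φ5 j) := by
          have h := add_le_add (add_le_add (add_le_add (add_le_add b1 b2) b3) b4) b5
          exact mul_le_mul_of_nonneg_left h (Real.sqrt_nonneg 2)
  have hTsum : ∀ (φ : ℤ × ℤ × ℤ × ℤ → ℤ → ℤ), (∀ k, Function.Injective (φ k)) →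
      ∑ j ∈ J, T φ j ^ 2 ≤ (K₀ * X) ^ 4 * X := by
    intro φ hφ
    have h := lemA K4 (fun k => ‖u k.1‖ * ‖u k.2.1‖ * ‖u k.2.2.1‖ * ‖u k.2.2.2‖)
      (fun k => by positivity) (fun m => Wt m * ‖u m‖) φ hφ S
      (fun m hm => by show Wt m * ‖u m‖ = 0; rw [huz m hm]; simp) J
    have e4 : ∑ k ∈ K4, (‖u k.1‖ * ‖u k.2.1‖ * ‖u k.2.2.1‖ * ‖u k.2.2.2‖) = A1 ^ 4 := by
      rw [hK4, hA1def]; exact sum4 S (fun m => ‖u m‖)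
    have e5 : ∑ m ∈ S, (Wt m * ‖u m‖) ^ 2 = X := by
      rw [hX]
      refine Finset.sum_congr rfl fun m _ => ?_
      rw [mul_pow, Wt_sq]
    rw [e4, e5] at h
    refine le_trans h ?_
    have h8 : (A1 ^ 4) ^ 2 ≤ (K₀ * X) ^ 4 := by
      have := pow_le_pow_left₀ (sq_nonneg A1) hA1sq 4
      calc (A1 ^ 4) ^ 2 = (A1 ^ 2) ^ 4 := by ring
        _ ≤ (K₀ * X) ^ 4 := this
    exact mul_le_mul_of_nonneg_right h8 hX0
  -- assemble
  have hmain : ∑ j ∈ J, (1 + (j : ℝ) ^ 2) * ‖∑' v : Res j, term u j v‖ ^ 2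
      ≤ 50 * ((K₀ * X) ^ 4 * X) := by
    have h10 : ∀ j : ℤ, (1 + (j : ℝ) ^ 2) * ‖∑' v : Res j, term u j v‖ ^ 2 ≤
        10 * (T φ1 j ^ 2 + T φ2 j ^ 2 + T φ3 j ^ 2 + T φ4 j ^ 2 + T φ5 j ^ 2) := by
      intro j
      have h := hWF j
      have hnn : 0 ≤ Wt j * ‖∑' v : Res j, term u j v‖ :=
        mul_nonneg (Wt_nonneg j) (norm_nonneg _)
      have hsq := pow_le_pow_left₀ hnn h 2
      rw [mul_pow, Wt_sq] at hsq
      rw [mul_pow, Real.sq_sqrt (by norm_num : (0:ℝ) ≤ 2)] at hsq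
      nlinarith [sq_nonneg (T φ1 j - T φ2 j), sq_nonneg (T φ1 j - T φ3 j),
        sq_nonneg (T φ1 j - T φ4 j), sq_nonneg (T φ1 j - T φ5 j),
        sq_nonneg (T φ2 j - T φ3 j), sq_nonneg (T φ2 j - T φ4 j),
        sq_nonneg (T φ2 j - T φ5 j), sq_nonneg (T φ3 j - T φ4 j),
        sq_nonneg (T φ3 j - T φ5 j), sq_nonneg (T φ4 j - T φ5 j)]
    calc ∑ j ∈ J, (1 + (j : ℝ) ^ 2) * ‖∑' v : Res j, term u j v‖ ^ 2
        ≤ ∑ j ∈ J, 10 * (T φ1 j ^ 2 + T φ2 j ^ 2 + T φ3 j ^ 2 + T φ4 j ^ 2 + T φ5 j ^ 2) :=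
          Finset.sum_le_sum fun j _ => h10 j
      _ = 10 * ((∑ j ∈ J, T φ1 j ^ 2) + (∑ j ∈ J, T φ2 j ^ 2) + (∑ j ∈ J, T φ3 j ^ 2)
            + (∑ j ∈ J, T φ4 j ^ 2) + (∑ j ∈ J, T φ5 j ^ 2)) := by
          rw [← Finset.mul_sum, Finset.sum_add_distrib, Finset.sum_add_distrib,
            Finset.sum_add_distrib, Finset.sum_add_distrib]
      _ ≤ 10 * (((K₀ * X) ^ 4 * X) + ((K₀ * X) ^ 4 * X) + ((K₀ * X) ^ 4 * X)
            + ((K₀ * X) ^ 4 * X) + ((K₀ * X) ^ 4 * X)) := by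
          have b1 := hTsum φ1 hφ1i
          have b2 := hTsum φ2 hφ2i
          have b3 := hTsum φ3 hφ3i
          have b4 := hTsum φ4 hφ4i
          have b5 := hTsum φ5 hφ5i
          linarith
      _ = 50 * ((K₀ * X) ^ 4 * X) := by ring
  -- finish
  have hLtsum : ∑' j : ℤ, (1 + (j : ℝ) ^ 2) * ‖∑' v : Res j, term u j v‖ ^ 2
      = ∑ j ∈ J, (1 + (j : ℝ) ^ 2) * ‖∑' v : Res j, term u j v‖ ^ 2 := by
    refine tsum_eq_sum fun j hj => ?_
    rw [hFz j hj]
    simp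
  rw [hLtsum, hXtsum]
  have hXr : (0 : ℝ) ≤ X ^ ((5 : ℝ) / 2) := Real.rpow_nonneg hX0 _
  have hrw : (8 * K₀ ^ 2 * X ^ ((5 : ℝ) / 2)) ^ 2 = 64 * K₀ ^ 4 * X ^ (5 : ℕ) := by
    have h1 : (X ^ ((5 : ℝ) / 2)) ^ (2 : ℕ) = X ^ (5 : ℕ) := by
      rw [← Real.rpow_natCast (X ^ ((5 : ℝ) / 2)) 2, ← Real.rpow_mul hX0]
      norm_num
    calc (8 * K₀ ^ 2 * X ^ ((5 : ℝ) / 2)) ^ 2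
        = 64 * K₀ ^ 4 * (X ^ ((5 : ℝ) / 2)) ^ (2 : ℕ) := by ring
      _ = 64 * K₀ ^ 4 * X ^ (5 : ℕ) := by rw [h1]
  have hfinal : ∑ j ∈ J, (1 + (j : ℝ) ^ 2) * ‖∑' v : Res j, term u j v‖ ^ 2
      ≤ (8 * K₀ ^ 2 * X ^ ((5 : ℝ) / 2)) ^ 2 := by
    rw [hrw]
    refine le_trans hmain ?_
    have : 50 * ((K₀ * X) ^ 4 * X) ≤ 64 * ((K₀ * X) ^ 4 * X) := by
      have : 0 ≤ (K₀ * X) ^ 4 * X := mul_nonneg (by positivity) hX0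
      linarith
    refine le_trans this (le_of_eq ?_)
    ring
  have := Real.sqrt_le_sqrt hfinal
  rwa [Real.sqrt_sq (by positivity)] at this
end

section
/- Let β > 3/8 and C(P,R) ⊂ ℝ denote, for integers p₁,p₂,p₄,j, the at-most-two-element set of integers p₃ satisfying the quadratic resonance (with p₅ := p₂+p₄+j−p₁−p₃, the tuple lies in R(j)). Then there is a constant C = C(β) such that for all j ∈ ℤ: ⟨j⟩² · Σ over (p₁,p₂,p₃,p₄,p₅) ∈ R(j) with |p₅| ≥ max(|p₁|,|p₂|,|p₃|,|p₄|,|j|) of ⟨p₁⟩^{−2β}⟨p₂⟩^{−2β}⟨p₃⟩^{−2β}⟨p₄⟩^{−2β}⟨p₅⟩^{−2} ≤ C. -/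
open Real

/-- Encoding map for resonant tuples. -/
def Phi0 (j : ℤ) (v : ℤ × ℤ × ℤ × ℤ × ℤ) : Fin 8 × Bool × ℤ × ℤ × ℤ :=
  if v.2.2.2.1 = v.2.2.1 ∧ v.2.2.2.2 = v.2.1 ∧ v.1 = j then
    (4, false, v.2.1, v.2.2.1, 0)
  else if v.2.2.2.1 = v.1 ∧ v.2.2.1 = j ∧ v.2.2.2.2 = v.2.1 then
    (5, false, v.2.1, v.1, 0)
  else if v.1 = j ∧ v.2.2.1 = v.2.1 ∧ v.2.2.2.2 = v.2.2.2.1 then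
    (6, false, v.2.2.2.1, v.2.1, 0)
  else if v.2.1 = v.1 ∧ v.2.2.1 = j ∧ v.2.2.2.2 = v.2.2.2.1 then
    (7, false, v.2.2.2.1, v.1, 0)
  else if |v.2.1| ≤ |v.1| ∧ |v.2.2.1| ≤ |v.1| ∧ |v.2.2.2.1| ≤ |v.1| then
    (0, decide (j + v.2.1 - v.2.2.1 + v.2.2.2.1 ≤ 2 * v.1), v.2.1, v.2.2.1, v.2.2.2.1)
  else if |v.2.2.1| ≤ |v.2.1| ∧ |v.2.2.2.1| ≤ |v.2.1| then
    (1, false, v.1, v.2.2.1, v.2.2.2.1)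
  else if |v.2.2.2.1| ≤ |v.2.2.1| then
    (2, decide (j - v.1 + v.2.1 + v.2.2.2.1 ≤ 2 * v.2.2.1), v.1, v.2.1, v.2.2.2.1)
  else
    (3, false, v.1, v.2.1, v.2.2.1)

/-- Specification of the encoding, sufficient to recover the tuple. -/
def PhiSpec (j : ℤ) (v : ℤ × ℤ × ℤ × ℤ × ℤ) (q : Fin 8 × Bool × ℤ × ℤ × ℤ) : Prop :=
  (q.1 = 4 → v = (j, q.2.2.1, q.2.2.2.1, q.2.2.2.1, q.2.2.1)) ∧
  (q.1 = 5 → v = (q.2.2.2.1, q.2.2.1, j, q.2.2.2.1, q.2.2.1)) ∧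
  (q.1 = 6 → v = (j, q.2.2.2.1, q.2.2.2.1, q.2.2.1, q.2.2.1)) ∧
  (q.1 = 7 → v = (q.2.2.2.1, q.2.2.2.1, j, q.2.2.1, q.2.2.1)) ∧
  (q.1 = 0 → v.2.1 = q.2.2.1 ∧ v.2.2.1 = q.2.2.2.1 ∧ v.2.2.2.1 = q.2.2.2.2 ∧
    q.2.1 = decide (j + v.2.1 - v.2.2.1 + v.2.2.2.1 ≤ 2 * v.1)) ∧
  (q.1 = 1 → v.1 = q.2.2.1 ∧ v.2.2.1 = q.2.2.2.1 ∧ v.2.2.2.1 = q.2.2.2.2 ∧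
    j - v.1 - v.2.2.1 + v.2.2.2.1 ≠ 0) ∧
  (q.1 = 2 → v.1 = q.2.2.1 ∧ v.2.1 = q.2.2.2.1 ∧ v.2.2.2.1 = q.2.2.2.2 ∧
    q.2.1 = decide (j - v.1 + v.2.1 + v.2.2.2.1 ≤ 2 * v.2.2.1)) ∧
  (q.1 = 3 → v.1 = q.2.2.1 ∧ v.2.1 = q.2.2.2.1 ∧ v.2.2.1 = q.2.2.2.2 ∧
    j - v.1 + v.2.1 - v.2.2.1 ≠ 0)

lemma phi0_spec (j : ℤ) (v : ℤ × ℤ × ℤ × ℤ × ℤ)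
    (hlin : v.1 - v.2.1 + v.2.2.1 - v.2.2.2.1 + v.2.2.2.2 = j)
    (hq : v.1 ^ 2 - v.2.1 ^ 2 + v.2.2.1 ^ 2 - v.2.2.2.1 ^ 2 + v.2.2.2.2 ^ 2 = j ^ 2) :
    PhiSpec j v (Phi0 j v) := by
  obtain ⟨p1, p2, p3, p4, p5⟩ := v
  dsimp only at hlin hq
  unfold Phi0
  dsimp only
  split_ifs with c1 c2 c3 c4 c5 c6 c7 <;>
    unfold PhiSpec <;> dsimp only <;>
    refine ⟨?_, ?_, ?_, ?_, ?_, ?_, ?_, ?_⟩ <;> intro hfin <;>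
    first
      | exact absurd hfin (by decide)
      | (simp only [Prod.mk.injEq, true_and, and_true]; omega)
      | exact ⟨rfl, rfl, rfl, rfl⟩
      | skip
  -- branch 1 (k = 2) : need D ≠ 0
  · refine ⟨rfl, rfl, rfl, ?_⟩
    intro hD
    have hp5 : p5 = p2 := by omega
    have hp4 : p4 = p1 + p3 - j := by omega
    subst hp5; subst hp4
    have key2 : 2 * ((j - p1) * (j - p3)) = 0 := by linear_combination -hq
    have key : (j - p1) * (j - p3) = 0 := by linarith
    rcases mul_eq_zero.mp key with h' | h'
    · exact c1 (by omega)
    · exact c2 (by omega)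
  -- branch 3 (k = 4) : need E ≠ 0
  · refine ⟨rfl, rfl, rfl, ?_⟩
    intro hE
    have hp5 : p5 = p4 := by omega
    have hp2 : p2 = p1 + p3 - j := by omega
    subst hp5; subst hp2
    have key2 : 2 * ((j - p1) * (j - p3)) = 0 := by linear_combination -hq
    have key : (j - p1) * (j - p3) = 0 := by linarith
    rcases mul_eq_zero.mp key with h' | h'
    · exact c3 (by omega)
    · exact c4 (by omega)

lemma phi0_inj (j : ℤ) {v w : ℤ × ℤ × ℤ × ℤ × ℤ}
    (hv1 : v.1 - v.2.1 + v.2.2.1 - v.2.2.2.1 + v.2.2.2.2 = j)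
    (hv2 : v.1 ^ 2 - v.2.1 ^ 2 + v.2.2.1 ^ 2 - v.2.2.2.1 ^ 2 + v.2.2.2.2 ^ 2 = j ^ 2)
    (hw1 : w.1 - w.2.1 + w.2.2.1 - w.2.2.2.1 + w.2.2.2.2 = j)
    (hw2 : w.1 ^ 2 - w.2.1 ^ 2 + w.2.2.1 ^ 2 - w.2.2.2.1 ^ 2 + w.2.2.2.2 ^ 2 = j ^ 2)
    (h : Phi0 j v = Phi0 j w) : v = w := by
  have Sv := phi0_spec j v hv1 hv2
  have Sw := phi0_spec j w hw1 hw2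
  rcases hqe : Phi0 j w with ⟨m, bq, x, y, z⟩
  rw [h, hqe] at Sv
  rw [hqe] at Sw
  obtain ⟨p1, p2, p3, p4, p5⟩ := v
  obtain ⟨r1, r2, r3, r4, r5⟩ := w
  dsimp only at hv1 hv2 hw1 hw2
  unfold PhiSpec at Sv Sw
  dsimp only at Sv Sw
  obtain ⟨S1, S2, S3, S4, S5, S6, S7, S8⟩ := Sv
  obtain ⟨T1, T2, T3, T4, T5, T6, T7, T8⟩ := Sw
  have hp5 : p5 = j - p1 + p2 - p3 + p4 := by omega
  have hr5 : r5 = j - r1 + r2 - r3 + r4 := by omega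
  subst hp5; subst hr5
  rcases m with ⟨mval, hm⟩
  interval_cases mval
  -- m = 0
  · obtain ⟨e1, e2, e3, e4⟩ := S5 rfl
    obtain ⟨f1, f2, f3, f4⟩ := T5 rfl
    have h2 : p2 = r2 := by omega
    have h3 : p3 = r3 := by omega
    have h4 : p4 = r4 := by omega
    subst h2; subst h3; subst h4
    have hbit : (j + p2 - p3 + p4 ≤ 2 * p1) ↔ (j + p2 - p3 + p4 ≤ 2 * r1) := by
      rw [← decide_eq_decide, ← e4, ← f4]
    have key2 : 2 * ((p1 - r1) * (p1 + r1 - (j + p2 - p3 + p4))) = 0 := by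
      linear_combination hv2 - hw2
    have key : (p1 - r1) * (p1 + r1 - (j + p2 - p3 + p4)) = 0 := by linarith
    have hp1 : p1 = r1 := by
      rcases mul_eq_zero.mp key with h' | h' <;> omega
    subst hp1
    rfl
  -- m = 1
  · obtain ⟨e1, e2, e3, e4⟩ := S6 rfl
    obtain ⟨f1, f2, f3, f4⟩ := T6 rfl
    have h1 : p1 = r1 := by omega
    have h3 : p3 = r3 := by omega
    have h4 : p4 = r4 := by omega
    subst h1; subst h3; subst h4
    have key2 : 2 * ((j - p1 - p3 + p4) * (p2 - r2)) = 0 := by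
      linear_combination hv2 - hw2
    have key : (j - p1 - p3 + p4) * (p2 - r2) = 0 := by linarith
    have hp2 : p2 = r2 := by
      rcases mul_eq_zero.mp key with h' | h' <;> omega
    subst hp2
    rfl
  -- m = 2
  · obtain ⟨e1, e2, e3, e4⟩ := S7 rfl
    obtain ⟨f1, f2, f3, f4⟩ := T7 rfl
    have h1 : p1 = r1 := by omega
    have h2 : p2 = r2 := by omega
    have h4 : p4 = r4 := by omega
    subst h1; subst h2; subst h4
    have hbit : (j - p1 + p2 + p4 ≤ 2 * p3) ↔ (j - p1 + p2 + p4 ≤ 2 * r3) := by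
      rw [← decide_eq_decide, ← e4, ← f4]
    have key2 : 2 * ((p3 - r3) * (p3 + r3 - (j - p1 + p2 + p4))) = 0 := by
      linear_combination hv2 - hw2
    have key : (p3 - r3) * (p3 + r3 - (j - p1 + p2 + p4)) = 0 := by linarith
    have hp3 : p3 = r3 := by
      rcases mul_eq_zero.mp key with h' | h' <;> omega
    subst hp3
    rfl
  -- m = 3
  · obtain ⟨e1, e2, e3, e4⟩ := S8 rfl
    obtain ⟨f1, f2, f3, f4⟩ := T8 rfl
    have h1 : p1 = r1 := by omega
    have h2 : p2 = r2 := by omega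
    have h3 : p3 = r3 := by omega
    subst h1; subst h2; subst h3
    have key2 : 2 * ((j - p1 + p2 - p3) * (p4 - r4)) = 0 := by
      linear_combination hv2 - hw2
    have key : (j - p1 + p2 - p3) * (p4 - r4) = 0 := by linarith
    have hp4 : p4 = r4 := by
      rcases mul_eq_zero.mp key with h' | h' <;> omega
    subst hp4
    rfl
  -- m = 4
  · have A := S1 rfl
    have B := T1 rfl
    simp only [Prod.mk.injEq] at A B ⊢
    omega
  -- m = 5
  · have A := S2 rfl
    have B := T2 rfl
    simp only [Prod.mk.injEq] at A B ⊢
    omega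
  -- m = 6
  · have A := S3 rfl
    have B := T3 rfl
    simp only [Prod.mk.injEq] at A B ⊢
    omega
  -- m = 7
  · have A := S4 rfl
    have B := T4 rfl
    simp only [Prod.mk.injEq] at A B ⊢
    omega


noncomputable def hfun (σ : ℝ) (n : ℤ) : ℝ := (1 + (n : ℝ) ^ 2) ^ (-σ)

lemma one_le_base (n : ℤ) : (1 : ℝ) ≤ 1 + (n : ℝ) ^ 2 := by nlinarith [sq_nonneg ((n : ℝ))]

lemma base_mono {a b : ℤ} (h : |a| ≤ |b|) : (1 : ℝ) + (a : ℝ) ^ 2 ≤ 1 + (b : ℝ) ^ 2 := by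
  have h2 : a ^ 2 ≤ b ^ 2 := by
    have ha := abs_nonneg a
    nlinarith [sq_abs a, sq_abs b]
  have : ((a : ℝ)) ^ 2 ≤ ((b : ℝ)) ^ 2 := by exact_mod_cast h2
  linarith

lemma summable_hfun {σ : ℝ} (hσ : 1 / 2 < σ) : Summable (hfun σ) := by
  have hnat : Summable (fun n : ℕ => (1 + (n : ℝ) ^ 2) ^ (-σ)) := by
    rw [← summable_nat_add_iff 1]
    have hmaj : Summable (fun n : ℕ => ((n + 1 : ℕ) : ℝ) ^ (-(2 * σ))) :=
      (summable_nat_add_iff (f := fun n : ℕ => (n : ℝ) ^ (-(2 * σ))) 1).mpr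
        (Real.summable_nat_rpow.mpr (by linarith))
    apply Summable.of_nonneg_of_le (fun n => by positivity) (fun n => ?_) hmaj
    have h1 : (0 : ℝ) < ((n + 1 : ℕ) : ℝ) := by positivity
    have h2 : (((n + 1 : ℕ) : ℝ)) ^ 2 ≤ 1 + (((n + 1 : ℕ) : ℝ)) ^ 2 := by linarith
    calc (1 + (((n + 1 : ℕ)) : ℝ) ^ 2) ^ (-σ) ≤ ((((n + 1 : ℕ)) : ℝ) ^ 2) ^ (-σ) :=
          Real.rpow_le_rpow_of_nonpos (by positivity) h2 (by linarith)
      _ = ((n + 1 : ℕ) : ℝ) ^ (-(2 * σ)) := by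
          rw [← Real.rpow_natCast ((n + 1 : ℕ) : ℝ) 2, ← Real.rpow_mul h1.le]
          norm_num
  apply Summable.of_nat_of_neg
  · simpa [hfun] using hnat
  · simpa [hfun] using hnat

lemma nd_core {β : ℝ} (hβ : 0 ≤ β) {aj a b c d a5 : ℝ}
    (hb : 1 ≤ b) (hc : 1 ≤ c) (hd : 1 ≤ d)
    (hba : b ≤ a) (hca : c ≤ a) (hda : d ≤ a)
    (hja : aj ≤ a5) (haj : 0 ≤ aj) (ha5 : 0 < a5) :
    aj * (a ^ (-β) * b ^ (-β) * c ^ (-β) * d ^ (-β) * a5⁻¹) ≤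
      b ^ (-(4 * β / 3)) * (c ^ (-(4 * β / 3)) * d ^ (-(4 * β / 3))) := by
  have ha : (1 : ℝ) ≤ a := hb.trans hba
  have ha0 : (0 : ℝ) < a := by linarith
  have hb0 : (0 : ℝ) < b := by linarith
  have hc0 : (0 : ℝ) < c := by linarith
  have hd0 : (0 : ℝ) < d := by linarith
  have hstep1 : aj * a5⁻¹ ≤ 1 := by
    rw [← div_eq_mul_inv]
    exact div_le_one_of_le₀ hja ha5.le
  have hsplit : a ^ (-β) = a ^ (-(β / 3)) * a ^ (-(β / 3)) * a ^ (-(β / 3)) := by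
    rw [← Real.rpow_add ha0, ← Real.rpow_add ha0]; congr 1; ring
  have hab : a ^ (-(β / 3)) ≤ b ^ (-(β / 3)) :=
    Real.rpow_le_rpow_of_nonpos hb0 hba (by linarith)
  have hac : a ^ (-(β / 3)) ≤ c ^ (-(β / 3)) :=
    Real.rpow_le_rpow_of_nonpos hc0 hca (by linarith)
  have had : a ^ (-(β / 3)) ≤ d ^ (-(β / 3)) :=
    Real.rpow_le_rpow_of_nonpos hd0 hda (by linarith)
  have hbm : b ^ (-β) * b ^ (-(β / 3)) = b ^ (-(4 * β / 3)) := by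
    rw [← Real.rpow_add hb0]; congr 1; ring
  have hcm : c ^ (-β) * c ^ (-(β / 3)) = c ^ (-(4 * β / 3)) := by
    rw [← Real.rpow_add hc0]; congr 1; ring
  have hdm : d ^ (-β) * d ^ (-(β / 3)) = d ^ (-(4 * β / 3)) := by
    rw [← Real.rpow_add hd0]; congr 1; ring
  have h1 : (0:ℝ) ≤ b ^ (-(β/3)) := by positivity
  have h3 : (0:ℝ) < a ^ (-(β/3)) := by positivity
  have hA : a ^ (-β) ≤ b ^ (-(β / 3)) * c ^ (-(β / 3)) * d ^ (-(β / 3)) := by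
    rw [hsplit]
    exact mul_le_mul (mul_le_mul hab hac h3.le h1) had h3.le (by positivity)
  have hkey : a ^ (-β) * b ^ (-β) * c ^ (-β) * d ^ (-β) ≤
      b ^ (-(4 * β / 3)) * (c ^ (-(4 * β / 3)) * d ^ (-(4 * β / 3))) := by
    calc a ^ (-β) * b ^ (-β) * c ^ (-β) * d ^ (-β)
        = a ^ (-β) * (b ^ (-β) * c ^ (-β) * d ^ (-β)) := by ring
      _ ≤ (b ^ (-(β / 3)) * c ^ (-(β / 3)) * d ^ (-(β / 3))) *
            (b ^ (-β) * c ^ (-β) * d ^ (-β)) :=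
          mul_le_mul_of_nonneg_right hA (by positivity)
      _ = (b ^ (-β) * b ^ (-(β / 3))) * ((c ^ (-β) * c ^ (-(β / 3))) *
            (d ^ (-β) * d ^ (-(β / 3)))) := by ring
      _ = b ^ (-(4 * β / 3)) * (c ^ (-(4 * β / 3)) * d ^ (-(4 * β / 3))) := by
          rw [hbm, hcm, hdm]
  calc aj * (a ^ (-β) * b ^ (-β) * c ^ (-β) * d ^ (-β) * a5⁻¹)
      = (aj * a5⁻¹) * (a ^ (-β) * b ^ (-β) * c ^ (-β) * d ^ (-β)) := by ring
    _ ≤ 1 * (b ^ (-(4 * β / 3)) * (c ^ (-(4 * β / 3)) * d ^ (-(4 * β / 3)))) := by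
        apply mul_le_mul hstep1 hkey (by positivity) (by norm_num)
    _ = _ := by ring


lemma pat_core {β : ℝ} (hβl : 0 ≤ β) (hβr : β ≤ 1 / 2) {aj ad ao : ℝ}
    (hj : 1 ≤ aj) (ho : 1 ≤ ao) (hja : aj ≤ ad) (hoa : ao ≤ ad) :
    aj * (aj ^ (-β) * ad ^ (-β) * ao ^ (-β) * ao ^ (-β) * ad⁻¹) ≤
      ad ^ (-(4 * β / 3)) * ao ^ (-(4 * β / 3)) := by
  have had : (1 : ℝ) ≤ ad := hj.trans hja
  have hj0 : (0 : ℝ) < aj := by linarith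
  have ho0 : (0 : ℝ) < ao := by linarith
  have hd0 : (0 : ℝ) < ad := by linarith
  -- merge factors
  have e1 : aj * aj ^ (-β) = aj ^ (1 - β) := by
    nth_rewrite 1 [← Real.rpow_one aj]
    rw [← Real.rpow_add hj0, sub_eq_add_neg]
  have e2 : ad ^ (-β) * ad⁻¹ = ad ^ (-(1 + β)) := by
    rw [← Real.rpow_neg_one ad, ← Real.rpow_add hd0]; congr 1; ring
  have e3 : ao ^ (-β) * ao ^ (-β) = ao ^ (-(2 * β)) := by
    rw [← Real.rpow_add ho0]; congr 1; ring
  have e4 : ad ^ (-(1 + β)) =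
      ad ^ (-(4 * β / 3)) * ad ^ (-(1 - β)) * ad ^ (-(2 * β / 3)) := by
    rw [← Real.rpow_add hd0, ← Real.rpow_add hd0]; congr 1; ring
  have s1 : aj ^ (1 - β) * ad ^ (-(1 - β)) ≤ 1 := by
    have h1 : aj ^ (1 - β) ≤ ad ^ (1 - β) :=
      Real.rpow_le_rpow hj0.le hja (by linarith)
    have h2 : ad ^ (1 - β) * ad ^ (-(1 - β)) = 1 := by
      rw [← Real.rpow_add hd0]; norm_num
    calc aj ^ (1 - β) * ad ^ (-(1 - β)) ≤ ad ^ (1 - β) * ad ^ (-(1 - β)) :=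
          mul_le_mul_of_nonneg_right h1 (by positivity)
      _ = 1 := h2
  have s2 : ad ^ (-(2 * β / 3)) ≤ ao ^ (-(2 * β / 3)) :=
    Real.rpow_le_rpow_of_nonpos ho0 hoa (by linarith)
  have s3 : ao ^ (-(2 * β)) * ao ^ (-(2 * β / 3)) = ao ^ (-(8 * β / 3)) := by
    rw [← Real.rpow_add ho0]; congr 1; ring
  have s4 : ao ^ (-(8 * β / 3)) ≤ ao ^ (-(4 * β / 3)) :=
    Real.rpow_le_rpow_of_exponent_le ho (by linarith)
  calc aj * (aj ^ (-β) * ad ^ (-β) * ao ^ (-β) * ao ^ (-β) * ad⁻¹)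
      = (aj * aj ^ (-β)) * (ad ^ (-β) * ad⁻¹) * (ao ^ (-β) * ao ^ (-β)) := by ring
    _ = aj ^ (1 - β) * (ad ^ (-(4 * β / 3)) * ad ^ (-(1 - β)) * ad ^ (-(2 * β / 3))) *
          ao ^ (-(2 * β)) := by rw [e1, e2, e3, e4]
    _ = (aj ^ (1 - β) * ad ^ (-(1 - β))) * (ad ^ (-(2 * β / 3)) * ao ^ (-(2 * β))) *
          ad ^ (-(4 * β / 3)) := by ring
    _ ≤ 1 * (ao ^ (-(2 * β / 3)) * ao ^ (-(2 * β))) * ad ^ (-(4 * β / 3)) := by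
        have hr1 : ad ^ (-(2 * β / 3)) * ao ^ (-(2 * β)) ≤
            ao ^ (-(2 * β / 3)) * ao ^ (-(2 * β)) :=
          mul_le_mul_of_nonneg_right s2 (by positivity)
        have := mul_le_mul s1 hr1 (by positivity) (by norm_num)
        exact mul_le_mul_of_nonneg_right this (by positivity)
    _ = ao ^ (-(2 * β)) * ao ^ (-(2 * β / 3)) * ad ^ (-(4 * β / 3)) := by ring
    _ = ao ^ (-(8 * β / 3)) * ad ^ (-(4 * β / 3)) := by rw [s3]
    _ ≤ ao ^ (-(4 * β / 3)) * ad ^ (-(4 * β / 3)) :=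
        mul_le_mul_of_nonneg_right s4 (by positivity)
    _ = ad ^ (-(4 * β / 3)) * ao ^ (-(4 * β / 3)) := by ring


noncomputable def Ffun (σ : ℝ) (q : Fin 8 × Bool × ℤ × ℤ × ℤ) : ℝ :=
  hfun σ q.2.2.1 * (hfun σ q.2.2.2.1 * hfun σ q.2.2.2.2)

lemma hfun_zero (σ : ℝ) : hfun σ 0 = 1 := by
  simp [hfun]

lemma phi0_bound {β : ℝ} (hβ0 : 0 ≤ β) (hβr : β ≤ 1 / 2) (j : ℤ) (v : ℤ × ℤ × ℤ × ℤ × ℤ)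
    (hmax : max (max (max (max |v.1| |v.2.1|) |v.2.2.1|) |v.2.2.2.1|) |j| ≤ |v.2.2.2.2|) :
    (1 + (j : ℝ) ^ 2) *
      ((1 + (v.1 : ℝ) ^ 2) ^ (-β) * (1 + (v.2.1 : ℝ) ^ 2) ^ (-β) *
       (1 + (v.2.2.1 : ℝ) ^ 2) ^ (-β) * (1 + (v.2.2.2.1 : ℝ) ^ 2) ^ (-β) *
       (1 + (v.2.2.2.2 : ℝ) ^ 2)⁻¹) ≤ Ffun (4 * β / 3) (Phi0 j v) := by
  obtain ⟨p1, p2, p3, p4, p5⟩ := v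
  dsimp only at hmax ⊢
  simp only [max_le_iff] at hmax
  obtain ⟨⟨⟨⟨m1, m2⟩, m3⟩, m4⟩, m5⟩ := hmax
  unfold Phi0
  dsimp only
  split_ifs with c1 c2 c3 c4 c5 c6 c7
  -- pattern 1 : (j, a, b, b, a), d = p2, o = p3
  · obtain ⟨d1, d2, d3⟩ := c1
    rw [d1, d2, d3]
    have hj2 : |j| ≤ |p2| := by rw [← d2]; exact m5
    have h32 : |p3| ≤ |p2| := by rw [← d2]; exact m3
    calc (1 + (j : ℝ) ^ 2) *
          ((1 + (j : ℝ) ^ 2) ^ (-β) * (1 + (p2 : ℝ) ^ 2) ^ (-β) *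
           (1 + (p3 : ℝ) ^ 2) ^ (-β) * (1 + (p3 : ℝ) ^ 2) ^ (-β) *
           (1 + (p2 : ℝ) ^ 2)⁻¹)
        ≤ (1 + (p2 : ℝ) ^ 2) ^ (-(4 * β / 3)) * (1 + (p3 : ℝ) ^ 2) ^ (-(4 * β / 3)) :=
          pat_core hβ0 hβr (one_le_base j) (one_le_base p3) (base_mono hj2) (base_mono h32)
      _ = Ffun (4 * β / 3) (4, false, p2, p3, 0) := by
          unfold Ffun; rw [hfun_zero]; unfold hfun; ring
  -- pattern 2 : (a, b, j, a, b), d = p2, o = p1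
  · obtain ⟨d1, d2, d3⟩ := c2
    rw [d1, d2, d3]
    have hj2 : |j| ≤ |p2| := by rw [← d3]; exact m5
    have h12 : |p1| ≤ |p2| := by rw [← d3]; exact m1
    calc (1 + (j : ℝ) ^ 2) *
          ((1 + (p1 : ℝ) ^ 2) ^ (-β) * (1 + (p2 : ℝ) ^ 2) ^ (-β) *
           (1 + (j : ℝ) ^ 2) ^ (-β) * (1 + (p1 : ℝ) ^ 2) ^ (-β) *
           (1 + (p2 : ℝ) ^ 2)⁻¹)
        = (1 + (j : ℝ) ^ 2) *
          ((1 + (j : ℝ) ^ 2) ^ (-β) * (1 + (p2 : ℝ) ^ 2) ^ (-β) *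
           (1 + (p1 : ℝ) ^ 2) ^ (-β) * (1 + (p1 : ℝ) ^ 2) ^ (-β) *
           (1 + (p2 : ℝ) ^ 2)⁻¹) := by ring
      _ ≤ (1 + (p2 : ℝ) ^ 2) ^ (-(4 * β / 3)) * (1 + (p1 : ℝ) ^ 2) ^ (-(4 * β / 3)) :=
          pat_core hβ0 hβr (one_le_base j) (one_le_base p1) (base_mono hj2) (base_mono h12)
      _ = Ffun (4 * β / 3) (5, false, p2, p1, 0) := by
          unfold Ffun; rw [hfun_zero]; unfold hfun; ring
  -- pattern 3 : (j, a, a, b, b), d = p4, o = p2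
  · obtain ⟨d1, d2, d3⟩ := c3
    rw [d1, d2, d3]
    have hj4 : |j| ≤ |p4| := by rw [← d3]; exact m5
    have h24 : |p2| ≤ |p4| := by rw [← d3]; exact m2
    calc (1 + (j : ℝ) ^ 2) *
          ((1 + (j : ℝ) ^ 2) ^ (-β) * (1 + (p2 : ℝ) ^ 2) ^ (-β) *
           (1 + (p2 : ℝ) ^ 2) ^ (-β) * (1 + (p4 : ℝ) ^ 2) ^ (-β) *
           (1 + (p4 : ℝ) ^ 2)⁻¹)
        = (1 + (j : ℝ) ^ 2) *
          ((1 + (j : ℝ) ^ 2) ^ (-β) * (1 + (p4 : ℝ) ^ 2) ^ (-β) *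
           (1 + (p2 : ℝ) ^ 2) ^ (-β) * (1 + (p2 : ℝ) ^ 2) ^ (-β) *
           (1 + (p4 : ℝ) ^ 2)⁻¹) := by ring
      _ ≤ (1 + (p4 : ℝ) ^ 2) ^ (-(4 * β / 3)) * (1 + (p2 : ℝ) ^ 2) ^ (-(4 * β / 3)) :=
          pat_core hβ0 hβr (one_le_base j) (one_le_base p2) (base_mono hj4) (base_mono h24)
      _ = Ffun (4 * β / 3) (6, false, p4, p2, 0) := by
          unfold Ffun; rw [hfun_zero]; unfold hfun; ring
  -- pattern 4 : (a, a, j, b, b), d = p4, o = p1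
  · obtain ⟨d1, d2, d3⟩ := c4
    rw [d1, d2, d3]
    have hj4 : |j| ≤ |p4| := by rw [← d3]; exact m5
    have h14 : |p1| ≤ |p4| := by rw [← d3]; exact m1
    calc (1 + (j : ℝ) ^ 2) *
          ((1 + (p1 : ℝ) ^ 2) ^ (-β) * (1 + (p1 : ℝ) ^ 2) ^ (-β) *
           (1 + (j : ℝ) ^ 2) ^ (-β) * (1 + (p4 : ℝ) ^ 2) ^ (-β) *
           (1 + (p4 : ℝ) ^ 2)⁻¹)
        = (1 + (j : ℝ) ^ 2) *
          ((1 + (j : ℝ) ^ 2) ^ (-β) * (1 + (p4 : ℝ) ^ 2) ^ (-β) *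
           (1 + (p1 : ℝ) ^ 2) ^ (-β) * (1 + (p1 : ℝ) ^ 2) ^ (-β) *
           (1 + (p4 : ℝ) ^ 2)⁻¹) := by ring
      _ ≤ (1 + (p4 : ℝ) ^ 2) ^ (-(4 * β / 3)) * (1 + (p1 : ℝ) ^ 2) ^ (-(4 * β / 3)) :=
          pat_core hβ0 hβr (one_le_base j) (one_le_base p1) (base_mono hj4) (base_mono h14)
      _ = Ffun (4 * β / 3) (7, false, p4, p1, 0) := by
          unfold Ffun; rw [hfun_zero]; unfold hfun; ring
  -- nd, k = 1
  · obtain ⟨d1, d2, d3⟩ := c5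
    have hb := nd_core hβ0 (one_le_base p2) (one_le_base p3) (one_le_base p4)
      (base_mono d1) (base_mono d2) (base_mono d3) (base_mono m5)
      (le_of_lt (lt_of_lt_of_le one_pos (one_le_base j))) (lt_of_lt_of_le one_pos (one_le_base p5))
    calc (1 + (j : ℝ) ^ 2) *
          ((1 + (p1 : ℝ) ^ 2) ^ (-β) * (1 + (p2 : ℝ) ^ 2) ^ (-β) *
           (1 + (p3 : ℝ) ^ 2) ^ (-β) * (1 + (p4 : ℝ) ^ 2) ^ (-β) *
           (1 + (p5 : ℝ) ^ 2)⁻¹)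
        ≤ (1 + (p2 : ℝ) ^ 2) ^ (-(4 * β / 3)) * ((1 + (p3 : ℝ) ^ 2) ^ (-(4 * β / 3)) *
            (1 + (p4 : ℝ) ^ 2) ^ (-(4 * β / 3))) := hb
      _ = Ffun (4 * β / 3) (0, decide (j + p2 - p3 + p4 ≤ 2 * p1), p2, p3, p4) := by
          unfold Ffun hfun; ring
  -- nd, k = 2
  · obtain ⟨d1, d2⟩ := c6
    have h12 : |p1| ≤ |p2| := by omega
    have hb := nd_core hβ0 (one_le_base p1) (one_le_base p3) (one_le_base p4)
      (base_mono h12) (base_mono d1) (base_mono d2) (base_mono m5)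
      (le_of_lt (lt_of_lt_of_le one_pos (one_le_base j))) (lt_of_lt_of_le one_pos (one_le_base p5))
    calc (1 + (j : ℝ) ^ 2) *
          ((1 + (p1 : ℝ) ^ 2) ^ (-β) * (1 + (p2 : ℝ) ^ 2) ^ (-β) *
           (1 + (p3 : ℝ) ^ 2) ^ (-β) * (1 + (p4 : ℝ) ^ 2) ^ (-β) *
           (1 + (p5 : ℝ) ^ 2)⁻¹)
        = (1 + (j : ℝ) ^ 2) *
          ((1 + (p2 : ℝ) ^ 2) ^ (-β) * (1 + (p1 : ℝ) ^ 2) ^ (-β) *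
           (1 + (p3 : ℝ) ^ 2) ^ (-β) * (1 + (p4 : ℝ) ^ 2) ^ (-β) *
           (1 + (p5 : ℝ) ^ 2)⁻¹) := by ring
      _ ≤ (1 + (p1 : ℝ) ^ 2) ^ (-(4 * β / 3)) * ((1 + (p3 : ℝ) ^ 2) ^ (-(4 * β / 3)) *
            (1 + (p4 : ℝ) ^ 2) ^ (-(4 * β / 3))) := hb
      _ = Ffun (4 * β / 3) (1, false, p1, p3, p4) := by
          unfold Ffun hfun; ring
  -- nd, k = 3
  · have h13 : |p1| ≤ |p3| := by omega
    have h23 : |p2| ≤ |p3| := by omega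
    have hb := nd_core hβ0 (one_le_base p1) (one_le_base p2) (one_le_base p4)
      (base_mono h13) (base_mono h23) (base_mono c7) (base_mono m5)
      (le_of_lt (lt_of_lt_of_le one_pos (one_le_base j))) (lt_of_lt_of_le one_pos (one_le_base p5))
    calc (1 + (j : ℝ) ^ 2) *
          ((1 + (p1 : ℝ) ^ 2) ^ (-β) * (1 + (p2 : ℝ) ^ 2) ^ (-β) *
           (1 + (p3 : ℝ) ^ 2) ^ (-β) * (1 + (p4 : ℝ) ^ 2) ^ (-β) *
           (1 + (p5 : ℝ) ^ 2)⁻¹)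
        = (1 + (j : ℝ) ^ 2) *
          ((1 + (p3 : ℝ) ^ 2) ^ (-β) * (1 + (p1 : ℝ) ^ 2) ^ (-β) *
           (1 + (p2 : ℝ) ^ 2) ^ (-β) * (1 + (p4 : ℝ) ^ 2) ^ (-β) *
           (1 + (p5 : ℝ) ^ 2)⁻¹) := by ring
      _ ≤ (1 + (p1 : ℝ) ^ 2) ^ (-(4 * β / 3)) * ((1 + (p2 : ℝ) ^ 2) ^ (-(4 * β / 3)) *
            (1 + (p4 : ℝ) ^ 2) ^ (-(4 * β / 3))) := hb
      _ = Ffun (4 * β / 3) (2, decide (j - p1 + p2 + p4 ≤ 2 * p3), p1, p2, p4) := by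
          unfold Ffun hfun; ring
  -- nd, k = 4
  · have h14 : |p1| ≤ |p4| := by omega
    have h24 : |p2| ≤ |p4| := by omega
    have h34 : |p3| ≤ |p4| := by omega
    have hb := nd_core hβ0 (one_le_base p1) (one_le_base p2) (one_le_base p3)
      (base_mono h14) (base_mono h24) (base_mono h34) (base_mono m5)
      (le_of_lt (lt_of_lt_of_le one_pos (one_le_base j))) (lt_of_lt_of_le one_pos (one_le_base p5))
    calc (1 + (j : ℝ) ^ 2) *
          ((1 + (p1 : ℝ) ^ 2) ^ (-β) * (1 + (p2 : ℝ) ^ 2) ^ (-β) *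
           (1 + (p3 : ℝ) ^ 2) ^ (-β) * (1 + (p4 : ℝ) ^ 2) ^ (-β) *
           (1 + (p5 : ℝ) ^ 2)⁻¹)
        = (1 + (j : ℝ) ^ 2) *
          ((1 + (p4 : ℝ) ^ 2) ^ (-β) * (1 + (p1 : ℝ) ^ 2) ^ (-β) *
           (1 + (p2 : ℝ) ^ 2) ^ (-β) * (1 + (p3 : ℝ) ^ 2) ^ (-β) *
           (1 + (p5 : ℝ) ^ 2)⁻¹) := by ring
      _ ≤ (1 + (p1 : ℝ) ^ 2) ^ (-(4 * β / 3)) * ((1 + (p2 : ℝ) ^ 2) ^ (-(4 * β / 3)) *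
            (1 + (p3 : ℝ) ^ 2) ^ (-(4 * β / 3))) := hb
      _ = Ffun (4 * β / 3) (3, false, p1, p2, p3) := by
          unfold Ffun hfun; ring

lemma hfun_nonneg (σ : ℝ) (n : ℤ) : 0 ≤ hfun σ n := by
  unfold hfun; positivity

lemma Ffun_nonneg (σ : ℝ) (q : Fin 8 × Bool × ℤ × ℤ × ℤ) : 0 ≤ Ffun σ q := by
  unfold Ffun hfun; positivity

lemma summable_Ffun {σ : ℝ} (hσ : 1 / 2 < σ) : Summable (Ffun σ) := by
  have hs : Summable (hfun σ) := summable_hfun hσ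
  have hnn : ∀ n, 0 ≤ hfun σ n := hfun_nonneg σ
  have h2 := Summable.mul_of_nonneg (f := hfun σ) (g := hfun σ) hs hs hnn hnn
  have h3 := Summable.mul_of_nonneg (f := hfun σ)
    (g := fun p : ℤ × ℤ => hfun σ p.1 * hfun σ p.2) hs h2 hnn
    (fun p => mul_nonneg (hnn _) (hnn _))
  have hbool : Summable (fun _ : Bool => (1 : ℝ)) :=
    (hasSum_fintype (fun _ : Bool => (1 : ℝ))).summable
  have hfin : Summable (fun _ : Fin 8 => (1 : ℝ)) :=
    (hasSum_fintype (fun _ : Fin 8 => (1 : ℝ))).summable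
  have h4 := Summable.mul_of_nonneg (f := fun _ : Bool => (1 : ℝ))
    (g := fun p : ℤ × ℤ × ℤ => hfun σ p.1 * (hfun σ p.2.1 * hfun σ p.2.2))
    hbool h3 (fun _ => zero_le_one)
    (fun p => mul_nonneg (hnn _) (mul_nonneg (hnn _) (hnn _)))
  have h5 := Summable.mul_of_nonneg (f := fun _ : Fin 8 => (1 : ℝ))
    (g := fun p : Bool × ℤ × ℤ × ℤ =>
      (1 : ℝ) * (hfun σ p.2.1 * (hfun σ p.2.2.1 * hfun σ p.2.2.2)))
    hfin h4 (fun _ => zero_le_one)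
    (fun p => mul_nonneg zero_le_one (mul_nonneg (hnn _) (mul_nonneg (hnn _) (hnn _))))
  exact h5.congr (fun q => by simp [Ffun])

lemma key {β : ℝ} (hβl : 3 / 8 < β) (hβr : β ≤ 1 / 2) :
    ∃ C : ℝ, 0 < C ∧ ∀ j : ℤ,
      Summable (fun v : {v : ℤ × ℤ × ℤ × ℤ × ℤ //
            (v.1 - v.2.1 + v.2.2.1 - v.2.2.2.1 + v.2.2.2.2 = j ∧
             v.1 ^ 2 - v.2.1 ^ 2 + v.2.2.1 ^ 2 - v.2.2.2.1 ^ 2 + v.2.2.2.2 ^ 2 = j ^ 2) ∧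
            max (max (max (max |v.1| |v.2.1|) |v.2.2.1|) |v.2.2.2.1|) |j| ≤ |v.2.2.2.2|} =>
          ((1 + (v.val.1 : ℝ) ^ 2) ^ (-β) * (1 + (v.val.2.1 : ℝ) ^ 2) ^ (-β) *
           (1 + (v.val.2.2.1 : ℝ) ^ 2) ^ (-β) * (1 + (v.val.2.2.2.1 : ℝ) ^ 2) ^ (-β) *
           (1 + (v.val.2.2.2.2 : ℝ) ^ 2)⁻¹)) ∧
      (1 + (j : ℝ) ^ 2) *
        ∑' v : {v : ℤ × ℤ × ℤ × ℤ × ℤ //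
            (v.1 - v.2.1 + v.2.2.1 - v.2.2.2.1 + v.2.2.2.2 = j ∧
             v.1 ^ 2 - v.2.1 ^ 2 + v.2.2.1 ^ 2 - v.2.2.2.1 ^ 2 + v.2.2.2.2 ^ 2 = j ^ 2) ∧
            max (max (max (max |v.1| |v.2.1|) |v.2.2.1|) |v.2.2.2.1|) |j| ≤ |v.2.2.2.2|},
          ((1 + (v.val.1 : ℝ) ^ 2) ^ (-β) * (1 + (v.val.2.1 : ℝ) ^ 2) ^ (-β) *
           (1 + (v.val.2.2.1 : ℝ) ^ 2) ^ (-β) * (1 + (v.val.2.2.2.1 : ℝ) ^ 2) ^ (-β) *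
           (1 + (v.val.2.2.2.2 : ℝ) ^ 2)⁻¹)
        ≤ C := by
  have hσ : 1 / 2 < 4 * β / 3 := by linarith
  have hβ0 : 0 ≤ β := by linarith
  have hF : Summable (Ffun (4 * β / 3)) := summable_Ffun hσ
  have htnn : 0 ≤ ∑' q, Ffun (4 * β / 3) q := tsum_nonneg (Ffun_nonneg _)
  refine ⟨(∑' q, Ffun (4 * β / 3) q) + 1, by linarith, fun j => ?_⟩
  set S := {v : ℤ × ℤ × ℤ × ℤ × ℤ //
      (v.1 - v.2.1 + v.2.2.1 - v.2.2.2.1 + v.2.2.2.2 = j ∧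
       v.1 ^ 2 - v.2.1 ^ 2 + v.2.2.1 ^ 2 - v.2.2.2.1 ^ 2 + v.2.2.2.2 ^ 2 = j ^ 2) ∧
      max (max (max (max |v.1| |v.2.1|) |v.2.2.1|) |v.2.2.2.1|) |j| ≤ |v.2.2.2.2|} with hS
  set Φ : S → Fin 8 × Bool × ℤ × ℤ × ℤ := fun v => Phi0 j v.val with hΦ
  have hinj : Function.Injective Φ := by
    intro v w h
    exact Subtype.ext (phi0_inj j v.2.1.1 v.2.1.2 w.2.1.1 w.2.1.2 h)
  have hle : ∀ v : S, (1 + (j : ℝ) ^ 2) *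
      ((1 + (v.val.1 : ℝ) ^ 2) ^ (-β) * (1 + (v.val.2.1 : ℝ) ^ 2) ^ (-β) *
       (1 + (v.val.2.2.1 : ℝ) ^ 2) ^ (-β) * (1 + (v.val.2.2.2.1 : ℝ) ^ 2) ^ (-β) *
       (1 + (v.val.2.2.2.2 : ℝ) ^ 2)⁻¹) ≤ Ffun (4 * β / 3) (Φ v) :=
    fun v => phi0_bound hβ0 hβr j v.val v.2.2
  have hFS : Summable (fun v : S => Ffun (4 * β / 3) (Φ v)) := hF.comp_injective hinj
  have hG : Summable (fun v : S => (1 + (j : ℝ) ^ 2) *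
      ((1 + (v.val.1 : ℝ) ^ 2) ^ (-β) * (1 + (v.val.2.1 : ℝ) ^ 2) ^ (-β) *
       (1 + (v.val.2.2.1 : ℝ) ^ 2) ^ (-β) * (1 + (v.val.2.2.2.1 : ℝ) ^ 2) ^ (-β) *
       (1 + (v.val.2.2.2.2 : ℝ) ^ 2)⁻¹)) :=
    Summable.of_nonneg_of_le (fun v => by positivity) hle hFS
  have hjne : (1 + (j : ℝ) ^ 2) ≠ 0 := by positivity
  have hsummand : Summable (fun v : S =>
      ((1 + (v.val.1 : ℝ) ^ 2) ^ (-β) * (1 + (v.val.2.1 : ℝ) ^ 2) ^ (-β) *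
       (1 + (v.val.2.2.1 : ℝ) ^ 2) ^ (-β) * (1 + (v.val.2.2.2.1 : ℝ) ^ 2) ^ (-β) *
       (1 + (v.val.2.2.2.2 : ℝ) ^ 2)⁻¹)) := by
    have h := hG.mul_left ((1 + (j : ℝ) ^ 2)⁻¹)
    refine h.congr fun v => ?_
    field_simp
  refine ⟨hsummand, ?_⟩
  rw [← tsum_mul_left]
  calc ∑' v : S, (1 + (j : ℝ) ^ 2) *
        ((1 + (v.val.1 : ℝ) ^ 2) ^ (-β) * (1 + (v.val.2.1 : ℝ) ^ 2) ^ (-β) *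
         (1 + (v.val.2.2.1 : ℝ) ^ 2) ^ (-β) * (1 + (v.val.2.2.2.1 : ℝ) ^ 2) ^ (-β) *
         (1 + (v.val.2.2.2.2 : ℝ) ^ 2)⁻¹)
      ≤ ∑' q, Ffun (4 * β / 3) q :=
        Summable.tsum_le_tsum_of_inj Φ hinj (fun c _ => Ffun_nonneg _ c) hle hG hF
    _ ≤ (∑' q, Ffun (4 * β / 3) q) + 1 := by linarith

lemma four_mono {β γ : ℝ} (h : γ ≤ β) (a b c d e : ℤ) :
    (1 + (a : ℝ) ^ 2) ^ (-β) * (1 + (b : ℝ) ^ 2) ^ (-β) * (1 + (c : ℝ) ^ 2) ^ (-β) *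
      (1 + (d : ℝ) ^ 2) ^ (-β) * (1 + (e : ℝ) ^ 2)⁻¹ ≤
    (1 + (a : ℝ) ^ 2) ^ (-γ) * (1 + (b : ℝ) ^ 2) ^ (-γ) * (1 + (c : ℝ) ^ 2) ^ (-γ) *
      (1 + (d : ℝ) ^ 2) ^ (-γ) * (1 + (e : ℝ) ^ 2)⁻¹ := by
  have ha := Real.rpow_le_rpow_of_exponent_le (one_le_base a) (neg_le_neg h)
  have hb := Real.rpow_le_rpow_of_exponent_le (one_le_base b) (neg_le_neg h)
  have hc := Real.rpow_le_rpow_of_exponent_le (one_le_base c) (neg_le_neg h)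
  have hd := Real.rpow_le_rpow_of_exponent_le (one_le_base d) (neg_le_neg h)
  have h1 : (0:ℝ) ≤ (1 + (a : ℝ) ^ 2) ^ (-β) := by positivity
  have h2 : (0:ℝ) ≤ (1 + (b : ℝ) ^ 2) ^ (-γ) := by positivity
  have h3 : (0:ℝ) ≤ (1 + (c : ℝ) ^ 2) ^ (-γ) := by positivity
  have h4 : (0:ℝ) ≤ (1 + (d : ℝ) ^ 2) ^ (-γ) := by positivity
  have h5 : (0:ℝ) ≤ (1 + (e : ℝ) ^ 2)⁻¹ := by positivity
  apply mul_le_mul_of_nonneg_right _ h5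
  apply mul_le_mul (mul_le_mul (mul_le_mul ha hb (by positivity) (by positivity))
    hc (by positivity) (by positivity)) hd (by positivity) (by positivity)

/-- Weighted resonant counting bound with exponent `2β`, `β > 3/8`, restricted to tuples
whose last entry dominates. -/
theorem weighted_resonant_counting (β : ℝ) (hβ : 3 / 8 < β) :
    ∃ C : ℝ, 0 < C ∧ ∀ j : ℤ,
      (1 + (j : ℝ) ^ 2) *
        ∑' v : {v : ℤ × ℤ × ℤ × ℤ × ℤ //
            (v.1 - v.2.1 + v.2.2.1 - v.2.2.2.1 + v.2.2.2.2 = j ∧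
             v.1 ^ 2 - v.2.1 ^ 2 + v.2.2.1 ^ 2 - v.2.2.2.1 ^ 2 + v.2.2.2.2 ^ 2 = j ^ 2) ∧
            max (max (max (max |v.1| |v.2.1|) |v.2.2.1|) |v.2.2.2.1|) |j| ≤ |v.2.2.2.2|},
          ((1 + (v.val.1 : ℝ) ^ 2) ^ (-β) * (1 + (v.val.2.1 : ℝ) ^ 2) ^ (-β) *
           (1 + (v.val.2.2.1 : ℝ) ^ 2) ^ (-β) * (1 + (v.val.2.2.2.1 : ℝ) ^ 2) ^ (-β) *
           (1 + (v.val.2.2.2.2 : ℝ) ^ 2)⁻¹)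
        ≤ C := by
  have hγl : 3 / 8 < min β (1 / 2) := lt_min hβ (by norm_num)
  have hγr : min β (1 / 2) ≤ 1 / 2 := min_le_right _ _
  have hγβ : min β (1 / 2) ≤ β := min_le_left _ _
  obtain ⟨C, hC, hkey⟩ := key hγl hγr
  refine ⟨C, hC, fun j => ?_⟩
  obtain ⟨hsumγ, hbd⟩ := hkey j
  have hmono : ∀ v : {v : ℤ × ℤ × ℤ × ℤ × ℤ //
      (v.1 - v.2.1 + v.2.2.1 - v.2.2.2.1 + v.2.2.2.2 = j ∧
       v.1 ^ 2 - v.2.1 ^ 2 + v.2.2.1 ^ 2 - v.2.2.2.1 ^ 2 + v.2.2.2.2 ^ 2 = j ^ 2) ∧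
      max (max (max (max |v.1| |v.2.1|) |v.2.2.1|) |v.2.2.2.1|) |j| ≤ |v.2.2.2.2|},
      ((1 + (v.val.1 : ℝ) ^ 2) ^ (-β) * (1 + (v.val.2.1 : ℝ) ^ 2) ^ (-β) *
       (1 + (v.val.2.2.1 : ℝ) ^ 2) ^ (-β) * (1 + (v.val.2.2.2.1 : ℝ) ^ 2) ^ (-β) *
       (1 + (v.val.2.2.2.2 : ℝ) ^ 2)⁻¹) ≤
      ((1 + (v.val.1 : ℝ) ^ 2) ^ (-(min β (1 / 2))) * (1 + (v.val.2.1 : ℝ) ^ 2) ^ (-(min β (1 / 2))) *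
       (1 + (v.val.2.2.1 : ℝ) ^ 2) ^ (-(min β (1 / 2))) * (1 + (v.val.2.2.2.1 : ℝ) ^ 2) ^ (-(min β (1 / 2))) *
       (1 + (v.val.2.2.2.2 : ℝ) ^ 2)⁻¹) :=
    fun v => four_mono hγβ _ _ _ _ _
  have hsumβ : Summable (fun v : {v : ℤ × ℤ × ℤ × ℤ × ℤ //
      (v.1 - v.2.1 + v.2.2.1 - v.2.2.2.1 + v.2.2.2.2 = j ∧
       v.1 ^ 2 - v.2.1 ^ 2 + v.2.2.1 ^ 2 - v.2.2.2.1 ^ 2 + v.2.2.2.2 ^ 2 = j ^ 2) ∧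
      max (max (max (max |v.1| |v.2.1|) |v.2.2.1|) |v.2.2.2.1|) |j| ≤ |v.2.2.2.2|} =>
      ((1 + (v.val.1 : ℝ) ^ 2) ^ (-β) * (1 + (v.val.2.1 : ℝ) ^ 2) ^ (-β) *
       (1 + (v.val.2.2.1 : ℝ) ^ 2) ^ (-β) * (1 + (v.val.2.2.2.1 : ℝ) ^ 2) ^ (-β) *
       (1 + (v.val.2.2.2.2 : ℝ) ^ 2)⁻¹)) :=
    Summable.of_nonneg_of_le (fun v => by positivity) hmono hsumγ
  calc (1 + (j : ℝ) ^ 2) * ∑' v, _ ≤ (1 + (j : ℝ) ^ 2) * ∑' v, _ :=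
        mul_le_mul_of_nonneg_left (Summable.tsum_le_tsum hmono hsumβ hsumγ) (by positivity)
    _ ≤ C := hbd
end
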